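/- arXiv:1702.08440 — 4 statements merged into one kernel-verified Lean document; each statement's English description precedes it below -/
import Mathlib

section
/- q-Mellin inversion: let f be defined on the q-lattice {q^n : n∈ℤ} with q-Mellin transform M_q(f) absolutely convergent on a strip α < Re(s) < β, and let c ∈ (α, β) be real. Then for every x = q^m in the q-lattice, f(x) = (log q)/(2πi(1-q)) · ∫_{c - iπ/log q}^{c + iπ/log q} M_q(f)(s) x^{-s} ds. -/
open Complex Filter

noncomputable def qPochInf (a : ℂ) (q : ℝ) : ℂ := ∏' k : ℕ, (1 - a * (q : ℂ) ^ k)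

noncomputable def qPoch (a : ℂ) (q : ℝ) (n : ℕ) : ℂ := ∏ k ∈ Finset.range n, (1 - a * (q : ℂ) ^ k)

noncomputable def qGamma (q : ℝ) (s : ℂ) : ℂ :=
  qPochInf (q : ℂ) q / qPochInf ((q : ℂ) ^ s) q * ((1 : ℂ) - (q : ℂ)) ^ (1 - s)

noncomputable def Kq (q : ℝ) (s : ℂ) : ℂ :=
  qPochInf (-(q : ℂ)) q * qPochInf (-1) q * qPochInf (q : ℂ) q /
    (qPochInf (-(q : ℂ) ^ s) q * qPochInf (-(q : ℂ) ^ (1 - s)) q)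

noncomputable def qMellin (q : ℝ) (f : ℝ → ℂ) (s : ℂ) : ℂ :=
  (1 - (q : ℂ)) * ∑' n : ℤ, f (q ^ n) * (q : ℂ) ^ ((n : ℂ) * s)

noncomputable def qFact (q : ℝ) (n : ℕ) : ℂ := qPoch (q : ℂ) q n / ((1 : ℂ) - (q : ℂ)) ^ n

theorem qMellin_inversion (q α β : ℝ) (hq : 0 < q) (hq1 : q < 1) (hab : α < β) (f : ℝ → ℂ)
    (habs : ∀ s : ℂ, α < s.re → s.re < β →
      Summable (fun n : ℤ => ‖f (q ^ n) * (q : ℂ) ^ ((n : ℂ) * s)‖))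
    (c : ℝ) (hc : α < c) (hcb : c < β) :
    ∀ m : ℤ, f (q ^ m) = (Real.log q : ℂ) / (2 * (Real.pi : ℂ) * I * (1 - (q : ℂ))) *
      (I * ∫ t in (-(Real.pi / Real.log q))..(Real.pi / Real.log q),
        qMellin q f ((c : ℂ) + (t : ℂ) * I) * (q : ℂ) ^ (-(m : ℂ) * ((c : ℂ) + (t : ℂ) * I))) := by
  intro m
  have hq0 : (q : ℂ) ≠ 0 := by
    exact_mod_cast hq.ne'
  set L := Real.log q with hLdef
  have hL : L < 0 := Real.log_neg hq hq1
  have hLne : L ≠ 0 := hL.ne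
  have hLC : (L : ℂ) ≠ 0 := by exact_mod_cast hLne
  have hq1C : (1 : ℂ) - (q : ℂ) ≠ 0 := by
    rw [sub_ne_zero]
    intro h
    have : (1 : ℝ) = q := by exact_mod_cast h
    linarith
  have hcpow : ∀ z : ℂ, (q : ℂ) ^ z = Complex.exp ((L : ℂ) * z) := fun z => by
    rw [Complex.cpow_def_of_ne_zero hq0, ← Complex.ofReal_log hq.le]
  set a₀ : ℝ := -(Real.pi / L) with ha₀
  set b₀ : ℝ := Real.pi / L with hb₀
  set g : ℝ → ℂ := fun t =>
    qMellin q f ((c : ℂ) + (t : ℂ) * I) * (q : ℂ) ^ (-(m : ℂ) * ((c : ℂ) + (t : ℂ) * I)) with hg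
  set F : ℤ → ℝ → ℂ := fun n t =>
    (1 - (q : ℂ)) * f (q ^ n) * Complex.exp ((L : ℂ) * ((n : ℂ) - (m : ℂ)) * (c : ℂ)) *
      Complex.exp (((L : ℂ) * ((n : ℂ) - (m : ℂ)) * I) * (t : ℂ)) with hF
  set bound : ℤ → ℝ → ℝ := fun n _ =>
    ‖(1 : ℂ) - (q : ℂ)‖ * ‖f (q ^ n)‖ * Real.exp (L * ((n : ℝ) - (m : ℝ)) * c) with hbound
  -- norms of F
  have hnormF : ∀ n t, ‖F n t‖ = bound n t := by
    intro n t
    have e1 : (L : ℂ) * ((n : ℂ) - (m : ℂ)) * (c : ℂ) = ((L * ((n : ℝ) - (m : ℝ)) * c : ℝ) : ℂ) := by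
      push_cast; ring
    have e2 : ((L : ℂ) * ((n : ℂ) - (m : ℂ)) * I) * (t : ℂ) = ((L * ((n : ℝ) - (m : ℝ)) * t : ℝ) : ℂ) * I := by
      push_cast; ring
    rw [hF, hbound]
    simp only [norm_mul, e1, e2, Complex.norm_exp_ofReal_mul_I,
      Complex.norm_exp, Complex.ofReal_re, Complex.mul_I_re, Complex.ofReal_im, neg_zero,
      Real.exp_zero, mul_one]
  have hsummable_bound : Summable fun n => bound n 0 := by
    have hS := habs (c : ℂ) (by simpa using hc) (by simpa using hcb)
    have := hS.mul_right (‖(1 : ℂ) - (q : ℂ)‖ * Real.exp (L * (-(m : ℝ)) * c))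
    refine this.congr fun n => ?_
    show _ = ‖(1 : ℂ) - (q : ℂ)‖ * ‖f (q ^ n)‖ * Real.exp (L * ((n : ℝ) - (m : ℝ)) * c)
    simp only [norm_mul, hcpow, Complex.norm_exp]
    have e1 : ((L : ℂ) * ((n : ℂ) * (c : ℂ))).re = L * ((n : ℝ) * c) := by
      have : (L : ℂ) * ((n : ℂ) * (c : ℂ)) = ((L * ((n : ℝ) * c) : ℝ) : ℂ) := by push_cast; ring
      rw [this, Complex.ofReal_re]
    rw [e1]
    rw [show L * ((n : ℝ) - (m : ℝ)) * c = L * ((n : ℝ) * c) + L * (-(m : ℝ)) * c by ring,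
      Real.exp_add]
    ring
  -- dominated convergence
  have hDC : HasSum (fun n => ∫ t in a₀..b₀, F n t) (∫ t in a₀..b₀, g t) := by
    apply intervalIntegral.hasSum_integral_of_dominated_convergence bound
    · intro n
      apply Continuous.aestronglyMeasurable
      rw [hF]
      fun_prop
    · intro n
      filter_upwards with t _
      exact (hnormF n t).le
    · filter_upwards with t _
      exact hsummable_bound
    · have : (fun t : ℝ => ∑' n, bound n t) = fun _ : ℝ => ∑' n, bound n 0 := rfl
      rw [this]
      exact intervalIntegrable_const
    · filter_upwards with t _
      set s : ℂ := (c : ℂ) + (t : ℂ) * I with hs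
      have hS := habs s (by simp [hs, hc]) (by simp [hs, hcb])
      have hsum : Summable fun n : ℤ => f (q ^ n) * (q : ℂ) ^ ((n : ℂ) * s) := hS.of_norm
      have H := (hsum.hasSum.mul_right ((q : ℂ) ^ (-(m : ℂ) * s))).mul_left (1 - (q : ℂ))
      have hfun : ∀ n : ℤ,
          (1 - (q : ℂ)) * (f (q ^ n) * (q : ℂ) ^ ((n : ℂ) * s) * (q : ℂ) ^ (-(m : ℂ) * s))
            = F n t := by
        intro n
        rw [hcpow, hcpow, hF]
        have e : (L : ℂ) * ((n : ℂ) * s) + (L : ℂ) * (-(m : ℂ) * s)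
            = (L : ℂ) * ((n : ℂ) - (m : ℂ)) * (c : ℂ) + ((L : ℂ) * ((n : ℂ) - (m : ℂ)) * I) * (t : ℂ) := by
          rw [hs]; ring
        calc (1 - (q : ℂ)) * (f (q ^ n) * Complex.exp ((L : ℂ) * ((n : ℂ) * s)) *
              Complex.exp ((L : ℂ) * (-(m : ℂ) * s)))
            = (1 - (q : ℂ)) * f (q ^ n) *
              Complex.exp ((L : ℂ) * ((n : ℂ) * s) + (L : ℂ) * (-(m : ℂ) * s)) := by
              rw [Complex.exp_add]; ring
          _ = _ := by rw [e, Complex.exp_add]; ring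
      have hval : (1 - (q : ℂ)) * ((∑' n : ℤ, f (q ^ n) * (q : ℂ) ^ ((n : ℂ) * s)) *
          (q : ℂ) ^ (-(m : ℂ) * s)) = g t := by
        simp only [hg, qMellin]; ring
      rw [← hval]
      exact H.congr_fun fun n => (hfun n).symm
  -- compute each integral
  set V : ℂ := ((b₀ - a₀ : ℝ) : ℂ) * ((1 - (q : ℂ)) * f (q ^ m)) with hV
  have hint : ∀ n : ℤ, (∫ t in a₀..b₀, F n t) = if n = m then V else 0 := by
    intro n
    by_cases hnm : n = m
    · subst hnm
      rw [if_pos rfl]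
      simp only [hF, sub_self, mul_zero, zero_mul, Complex.exp_zero, mul_one]
      rw [intervalIntegral.integral_const, hV, Complex.real_smul]
    · have hcc : (L : ℂ) * ((n : ℂ) - (m : ℂ)) * I ≠ 0 := by
        apply mul_ne_zero (mul_ne_zero hLC _) Complex.I_ne_zero
        rw [sub_ne_zero]
        exact_mod_cast fun h => hnm (by exact_mod_cast h)
      rw [if_neg hnm]
      simp only [hF]
      rw [intervalIntegral.integral_const_mul, integral_exp_mul_complex hcc]
      have e1 : ((L : ℂ) * ((n : ℂ) - (m : ℂ)) * I) * (b₀ : ℂ)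
          = ((L : ℂ) * ((n : ℂ) - (m : ℂ)) * I) * (a₀ : ℂ) + ((n - m : ℤ) : ℂ) * (2 * (Real.pi : ℂ) * I) := by
        rw [ha₀, hb₀]
        push_cast
        field_simp
        ring
      rw [e1, Complex.exp_add, Complex.exp_int_mul_two_pi_mul_I, mul_one, sub_self, zero_div,
        mul_zero]
  have hB : HasSum (fun n : ℤ => ∫ t in a₀..b₀, F n t) V := by
    have := hasSum_ite_eq m V
    rwa [show (fun n : ℤ => if n = m then V else 0) = fun n => ∫ t in a₀..b₀, F n t from
      funext fun n => (hint n).symm] at this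
  have hInt : (∫ t in a₀..b₀, g t) = V := hDC.unique hB
  have hπ : (Real.pi : ℂ) ≠ 0 := by exact_mod_cast Real.pi_ne_zero
  have hba : ((b₀ - a₀ : ℝ) : ℂ) = 2 * (Real.pi : ℂ) / (L : ℂ) := by
    rw [hb₀, ha₀, show Real.pi / L - -(Real.pi / L) = 2 * Real.pi / L by ring]
    push_cast
    ring
  have hD : (2 * (Real.pi : ℂ) * I * (1 - (q : ℂ))) ≠ 0 :=
    mul_ne_zero (mul_ne_zero (mul_ne_zero two_ne_zero hπ) Complex.I_ne_zero) hq1C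
  rw [hInt, hV, hba, div_mul_eq_mul_div, eq_div_iff hD]
  field_simp
end

section
/- Characterization of q-Mellin transforms: let a < b be reals and F analytic on the strip a < Re(s) < b and periodic with period 2πi/log q. Define f on the q-lattice by f(q^n) = (log q)/(2πi(1-q)) ∫_{c-iπ/log q}^{c+iπ/log q} F(s) q^{-ns} ds for some fixed c ∈ (a,b). Then f is independent of the choice of c, and M_q(f)(s) = F(s) for all s in the strip a < Re(s) < b. -/
open Complex Filter

lemma qm_strip_open (a b : ℝ) : IsOpen {s : ℂ | a < s.re ∧ s.re < b} := by
  have : {s : ℂ | a < s.re ∧ s.re < b} = Complex.re ⁻¹' (Set.Ioo a b) := rfl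
  rw [this]
  exact isOpen_Ioo.preimage Complex.continuous_re

lemma qm_shift (q a b : ℝ) (hq : 0 < q) (hq1 : q < 1)
    (F : ℂ → ℂ) (hF : DifferentiableOn ℂ F {s : ℂ | a < s.re ∧ s.re < b})
    (hper : ∀ s : ℂ, a < s.re → s.re < b → F (s + 2 * Real.pi * I / Real.log q) = F s)
    (c₁ c₂ : ℝ) (h1 : a < c₁) (h1b : c₁ < b) (h2 : a < c₂) (h2b : c₂ < b) (n : ℤ) :
    (∫ t in (-(Real.pi / Real.log q))..(Real.pi / Real.log q),
        F ((c₁ : ℂ) + (t : ℂ) * I) * Complex.exp (-(n:ℂ) * ((c₁ : ℂ) + (t : ℂ) * I) * (Real.log q : ℂ))) =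
    (∫ t in (-(Real.pi / Real.log q))..(Real.pi / Real.log q),
        F ((c₂ : ℂ) + (t : ℂ) * I) * Complex.exp (-(n:ℂ) * ((c₂ : ℂ) + (t : ℂ) * I) * (Real.log q : ℂ))) := by
  have hL : Real.log q < 0 := Real.log_neg hq hq1
  have hL0 : (Real.log q : ℂ) ≠ 0 := by exact_mod_cast hL.ne
  set L := Real.log q with hLdef
  set G : ℂ → ℂ := fun z => F z * Complex.exp (-(n:ℂ) * z * (L : ℂ)) with hG
  have hGper : ∀ z : ℂ, a < z.re → z.re < b → G (z + 2 * Real.pi * I / L) = G z := by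
    intro z hz1 hz2
    have h1 : F (z + 2 * Real.pi * I / L) = F z := hper z hz1 hz2
    have h2 : Complex.exp (-(n:ℂ) * (z + 2 * Real.pi * I / L) * (L:ℂ)) =
        Complex.exp (-(n:ℂ) * z * (L:ℂ)) := by
      have : -(n:ℂ) * (z + 2 * Real.pi * I / L) * (L:ℂ) =
          -(n:ℂ) * z * (L:ℂ) + (-(n:ℂ)) * (2 * Real.pi * I) := by
        field_simp
        ring
      rw [this, Complex.exp_add]
      have : Complex.exp (-(n:ℂ) * (2 * Real.pi * I)) = 1 := by
        rw [← Complex.exp_int_mul_two_pi_mul_I (-n)]; push_cast; ring_nf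
      rw [this, mul_one]
    simp only [hG, h1, h2]
  set z : ℂ := (c₁ : ℂ) + (-(Real.pi / L) : ℝ) * I with hz
  set w : ℂ := (c₂ : ℂ) + ((Real.pi / L) : ℝ) * I with hw
  have hzre : z.re = c₁ := by simp [hz]
  have hwre : w.re = c₂ := by simp [hw]
  have hzim : z.im = -(Real.pi / L) := by simp [hz]
  have hwim : w.im = Real.pi / L := by simp [hw]
  have hGd : DifferentiableOn ℂ G ((Set.uIcc z.re w.re) ×ℂ (Set.uIcc z.im w.im)) := by
    apply DifferentiableOn.mul
    · apply hF.mono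
      intro u hu
      rw [Complex.mem_reProdIm, hzre, hwre] at hu
      rcases hu with ⟨hu1, _⟩
      rw [Set.mem_uIcc] at hu1
      rcases hu1 with h | h
      · exact ⟨lt_of_lt_of_le h1 h.1, lt_of_le_of_lt h.2 h2b⟩
      · exact ⟨lt_of_lt_of_le h2 h.1, lt_of_le_of_lt h.2 h1b⟩
    · exact (Complex.differentiable_exp.comp (by fun_prop)).differentiableOn
  have hrect := Complex.integral_boundary_rect_eq_zero_of_differentiableOn G z w hGd
  rw [hzre, hwre, hzim, hwim] at hrect
  have hcancel : (∫ x : ℝ in c₁..c₂, G (x + (-(Real.pi / L) : ℝ) * I)) =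
      ∫ x : ℝ in c₁..c₂, G (x + ((Real.pi / L) : ℝ) * I) := by
    apply intervalIntegral.integral_congr
    intro x hx
    have hx1 : a < x := lt_of_lt_of_le (lt_min h1 h2) hx.1
    have hx2 : x < b := lt_of_le_of_lt hx.2 (max_lt h1b h2b)
    have key := hGper ((x:ℂ) + (-(Real.pi / L) : ℝ) * I) (by simpa using hx1) (by simpa using hx2)
    have harg : ((x:ℂ) + (-(Real.pi / L) : ℝ) * I) + 2 * Real.pi * I / L
        = (x:ℂ) + ((Real.pi / L) : ℝ) * I := by
      push_cast
      field_simp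
      ring
    rw [harg] at key
    exact key.symm
  rw [hcancel, sub_self, zero_add, sub_eq_zero] at hrect
  rw [smul_eq_mul, smul_eq_mul] at hrect
  have := mul_left_cancel₀ Complex.I_ne_zero hrect
  simpa only [hG] using this.symm

lemma qm_bound (q a b : ℝ) (hq : 0 < q) (hq1 : q < 1)
    (F : ℂ → ℂ) (hF : DifferentiableOn ℂ F {s : ℂ | a < s.re ∧ s.re < b})
    (c' : ℝ) (h1 : a < c') (h2 : c' < b) :
    ∃ M : ℝ, 0 ≤ M ∧ ∀ n : ℤ,
      ‖(Real.log q : ℂ) / (2 * (Real.pi : ℂ) * I * (1 - (q : ℂ))) *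
        (I * ∫ t in (-(Real.pi / Real.log q))..(Real.pi / Real.log q),
          F ((c' : ℂ) + (t : ℂ) * I) *
            Complex.exp (-(n:ℂ) * ((c' : ℂ) + (t : ℂ) * I) * (Real.log q : ℂ)))‖
        ≤ M * Real.exp (-(n : ℝ) * c' * Real.log q) := by
  have hL : Real.log q < 0 := Real.log_neg hq hq1
  set L := Real.log q with hLdef
  have hopen : IsOpen {s : ℂ | a < s.re ∧ s.re < b} := qm_strip_open a b
  have hFc : Continuous fun t : ℝ => F ((c' : ℂ) + (t : ℂ) * I) := by
    rw [continuous_iff_continuousAt]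
    intro t
    have hmem : ((c' : ℂ) + (t : ℂ) * I) ∈ {s : ℂ | a < s.re ∧ s.re < b} := by
      constructor <;> simp [h1, h2]
    have h' := (hF.differentiableAt (hopen.mem_nhds hmem)).continuousAt
    exact ContinuousAt.comp h' (by fun_prop)
  obtain ⟨M₀, hM₀⟩ := (isCompact_uIcc (a := -(Real.pi / L)) (b := Real.pi / L)).exists_bound_of_continuousOn
      (hFc.continuousOn (s := Set.uIcc (-(Real.pi / L)) (Real.pi / L)))
  have hM₀0 : 0 ≤ M₀ := le_trans (norm_nonneg _) (hM₀ _ Set.left_mem_uIcc)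
  set P := ‖(L : ℂ) / (2 * (Real.pi : ℂ) * I * (1 - (q : ℂ)))‖ with hP
  have hnegL : (0:ℝ) < -L := by linarith
  refine ⟨P * M₀ * (2 * Real.pi / (-L)),
    mul_nonneg (mul_nonneg (norm_nonneg _) hM₀0) (div_nonneg (by positivity) hnegL.le), fun n => ?_⟩
  have hnorm_exp : ∀ t : ℝ, ‖Complex.exp (-(n:ℂ) * ((c' : ℂ) + (t : ℂ) * I) * (L : ℂ))‖
      = Real.exp (-(n : ℝ) * c' * L) := by
    intro t
    have harg : -(n:ℂ) * ((c' : ℂ) + (t : ℂ) * I) * (L : ℂ)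
        = ((-(n : ℝ) * c' * L : ℝ) : ℂ) + ((-(n : ℝ) * t * L : ℝ) : ℂ) * I := by
      push_cast; ring
    rw [harg, Complex.norm_exp]
    congr 1
    simp
  have hint : ‖∫ t in (-(Real.pi / L))..(Real.pi / L),
      F ((c' : ℂ) + (t : ℂ) * I) * Complex.exp (-(n:ℂ) * ((c' : ℂ) + (t : ℂ) * I) * (L : ℂ))‖
      ≤ (M₀ * Real.exp (-(n : ℝ) * c' * L)) * |Real.pi / L - (-(Real.pi / L))| := by
    apply intervalIntegral.norm_integral_le_of_norm_le_const
    intro t ht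
    rw [norm_mul, hnorm_exp t]
    have htmem : t ∈ Set.uIcc (-(Real.pi / L)) (Real.pi / L) := Set.uIoc_subset_uIcc ht
    exact mul_le_mul_of_nonneg_right (hM₀ t htmem) (Real.exp_nonneg _)
  have habs : |Real.pi / L - (-(Real.pi / L))| = 2 * Real.pi / (-L) := by
    have h2 : Real.pi / L - (-(Real.pi / L)) = 2 * Real.pi / L := by ring
    rw [h2, abs_of_neg (div_neg_of_pos_of_neg (by positivity) hL)]
    ring
  calc ‖(L : ℂ) / (2 * (Real.pi : ℂ) * I * (1 - (q : ℂ))) *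
        (I * ∫ t in (-(Real.pi / L))..(Real.pi / L),
          F ((c' : ℂ) + (t : ℂ) * I) * Complex.exp (-(n:ℂ) * ((c' : ℂ) + (t : ℂ) * I) * (L : ℂ)))‖
      = P * ‖∫ t in (-(Real.pi / L))..(Real.pi / L),
          F ((c' : ℂ) + (t : ℂ) * I) * Complex.exp (-(n:ℂ) * ((c' : ℂ) + (t : ℂ) * I) * (L : ℂ))‖ := by
        rw [norm_mul, norm_mul, Complex.norm_I, one_mul]
    _ ≤ P * ((M₀ * Real.exp (-(n : ℝ) * c' * L)) * |Real.pi / L - (-(Real.pi / L))|) :=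
        mul_le_mul_of_nonneg_left hint (norm_nonneg _)
    _ = P * M₀ * (2 * Real.pi / (-L)) * Real.exp (-(n : ℝ) * c' * L) := by rw [habs]; ring

theorem qMellin_characterization (q a b : ℝ) (hq : 0 < q) (hq1 : q < 1) (hab : a < b)
    (F : ℂ → ℂ) (hF : DifferentiableOn ℂ F {s : ℂ | a < s.re ∧ s.re < b})
    (hper : ∀ s : ℂ, a < s.re → s.re < b → F (s + 2 * Real.pi * I / Real.log q) = F s)
    (c : ℝ) (hc : a < c) (hcb : c < b) (f : ℝ → ℂ)
    (hf : ∀ n : ℤ, f (q ^ n) = (Real.log q : ℂ) / (2 * (Real.pi : ℂ) * I * (1 - (q : ℂ))) *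
      (I * ∫ t in (-(Real.pi / Real.log q))..(Real.pi / Real.log q),
        F ((c : ℂ) + (t : ℂ) * I) * (q : ℂ) ^ (-(n : ℂ) * ((c : ℂ) + (t : ℂ) * I)))) :
    (∀ c' : ℝ, a < c' → c' < b → ∀ n : ℤ,
      f (q ^ n) = (Real.log q : ℂ) / (2 * (Real.pi : ℂ) * I * (1 - (q : ℂ))) *
        (I * ∫ t in (-(Real.pi / Real.log q))..(Real.pi / Real.log q),
          F ((c' : ℂ) + (t : ℂ) * I) * (q : ℂ) ^ (-(n : ℂ) * ((c' : ℂ) + (t : ℂ) * I)))) ∧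
    (∀ s : ℂ, a < s.re → s.re < b → qMellin q f s = F s) := by
  have hL : Real.log q < 0 := Real.log_neg hq hq1
  set L := Real.log q with hLdef
  have hLC : (L : ℂ) ≠ 0 := by exact_mod_cast hL.ne
  have hq0 : (q : ℂ) ≠ 0 := by exact_mod_cast hq.ne'
  have hcpow : ∀ w : ℂ, (q : ℂ) ^ w = Complex.exp (w * (L : ℂ)) := by
    intro w
    rw [Complex.cpow_def_of_ne_zero hq0, hLdef, Complex.ofReal_log hq.le, mul_comm]
  have hπC : (Real.pi : ℂ) ≠ 0 := by exact_mod_cast Real.pi_ne_zero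
  have hq1C : (1 : ℂ) - (q : ℂ) ≠ 0 := by
    have h1 : (1:ℝ) ≠ q := by linarith
    exact sub_ne_zero.mpr (by exact_mod_cast h1)
  -- integral in cpow form equals integral in exp form
  have hconv : ∀ (c' : ℝ) (n : ℤ),
      (∫ t in (-(Real.pi / L))..(Real.pi / L),
        F ((c' : ℂ) + (t : ℂ) * I) * (q : ℂ) ^ (-(n : ℂ) * ((c' : ℂ) + (t : ℂ) * I)))
      = (∫ t in (-(Real.pi / L))..(Real.pi / L),
        F ((c' : ℂ) + (t : ℂ) * I) * Complex.exp (-(n:ℂ) * ((c' : ℂ) + (t : ℂ) * I) * (L : ℂ))) := by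
    intro c' n
    apply intervalIntegral.integral_congr
    intro t _
    simp only [hcpow]
  -- part 1 in exp form
  have hrep : ∀ c' : ℝ, a < c' → c' < b → ∀ n : ℤ,
      f (q ^ n) = (L : ℂ) / (2 * (Real.pi : ℂ) * I * (1 - (q : ℂ))) *
        (I * ∫ t in (-(Real.pi / L))..(Real.pi / L),
          F ((c' : ℂ) + (t : ℂ) * I) * Complex.exp (-(n:ℂ) * ((c' : ℂ) + (t : ℂ) * I) * (L : ℂ))) := by
    intro c' h1 h2 n
    rw [hf n, hconv c n, qm_shift q a b hq hq1 F hF hper c c' hc hcb h1 h2 n]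
  have part1 : ∀ c' : ℝ, a < c' → c' < b → ∀ n : ℤ,
      f (q ^ n) = (L : ℂ) / (2 * (Real.pi : ℂ) * I * (1 - (q : ℂ))) *
        (I * ∫ t in (-(Real.pi / L))..(Real.pi / L),
          F ((c' : ℂ) + (t : ℂ) * I) * (q : ℂ) ^ (-(n : ℂ) * ((c' : ℂ) + (t : ℂ) * I))) := by
    intro c' h1 h2 n
    rw [hconv c' n]
    exact hrep c' h1 h2 n
  refine ⟨part1, ?_⟩
  -- part 2
  intro s hs1 hs2
  set cs : ℝ := s.re with hcs
  set τ : ℝ := s.im with hτ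
  set T : ℝ := 2 * Real.pi / (-L) with hTdef
  have hT0 : 0 < T := by
    apply div_pos (by positivity); linarith
  haveI : Fact (0 < T) := ⟨hT0⟩
  set gF : ℝ → ℂ := fun t => F ((cs : ℂ) + (t : ℂ) * I) with hgF
  have hstrip : ∀ t : ℝ, ((cs : ℂ) + (t : ℂ) * I) ∈ {z : ℂ | a < z.re ∧ z.re < b} := by
    intro t; constructor <;> simp [hs1, hs2]
  have hPer : Function.Periodic gF T := by
    intro t
    have key := hper ((cs : ℂ) + ((t + T : ℝ) : ℂ) * I) (by simpa using hs1) (by simpa using hs2)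
    have hTC0 : ((T : ℝ) : ℂ) * I + 2 * (Real.pi : ℂ) * I / (L : ℂ) = 0 := by
      rw [hTdef]
      push_cast
      field_simp
      ring
    have harg : ((cs : ℂ) + ((t + T : ℝ) : ℂ) * I) + 2 * Real.pi * I / L = (cs : ℂ) + (t : ℂ) * I := by
      push_cast
      push_cast at hTC0
      linear_combination hTC0
    rw [harg] at key
    simpa only [hgF] using key.symm
  have hcont : Continuous gF := by
    rw [continuous_iff_continuousAt]
    intro t
    have h' := (hF.differentiableAt ((qm_strip_open a b).mem_nhds (hstrip t))).continuousAt
    exact ContinuousAt.comp h' (by fun_prop)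
  have hlift : Continuous hPer.lift := by
    have : hPer.lift ∘ (QuotientAddGroup.mk : ℝ → AddCircle T) = gF := funext hPer.lift_coe
    rw [(QuotientAddGroup.isQuotientMap_mk _).continuous_iff, this]
    exact hcont
  set φ : C(AddCircle T, ℂ) := ⟨hPer.lift, hlift⟩ with hφ
  have hφcoe : ∀ x : ℝ, φ ((x : ℝ) : AddCircle T) = gF x := fun x => hPer.lift_coe x
  -- Fourier coefficients
  have hTsum : Real.pi / L + T = -(Real.pi / L) := by
    rw [hTdef]; field_simp; ring
  have hcoeff : ∀ n : ℤ, fourierCoeff (⇑φ) (-n)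
      = (1 - (q : ℂ)) * f (q ^ n) * Complex.exp ((n : ℂ) * (cs : ℂ) * (L : ℂ)) := by
    intro n
    have h0 := fourierCoeff_eq_intervalIntegral (⇑φ) (-n) (Real.pi / L)
    rw [hTsum, neg_neg] at h0
    set J : ℂ := ∫ x in (Real.pi / L)..(-(Real.pi / L)),
        Complex.exp (-(n:ℂ) * (x:ℂ) * (L:ℂ) * I) * gF x with hJ
    have hint : (∫ x in (Real.pi / L)..(-(Real.pi / L)),
        (fourier n ((x : ℝ) : AddCircle T) : ℂ) • φ ((x : ℝ) : AddCircle T)) = J := by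
      apply intervalIntegral.integral_congr
      intro x _
      show (fourier n ((x : ℝ) : AddCircle T) : ℂ) • φ ((x : ℝ) : AddCircle T) = _
      rw [hφcoe x, fourier_coe_apply, smul_eq_mul]
      congr 2
      rw [hTdef]
      push_cast
      field_simp
    rw [hint] at h0
    -- now express f (q ^ n) in terms of J
    have hfn := hrep cs hs1 hs2 n
    have hsplit : (∫ t in (-(Real.pi / L))..(Real.pi / L),
        F ((cs : ℂ) + (t : ℂ) * I) * Complex.exp (-(n:ℂ) * ((cs : ℂ) + (t : ℂ) * I) * (L : ℂ)))
        = Complex.exp (-((n : ℂ) * (cs : ℂ) * (L : ℂ))) * (-J) := by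
      rw [hJ, ← intervalIntegral.integral_symm, ← intervalIntegral.integral_const_mul]
      apply intervalIntegral.integral_congr
      intro t _
      show F ((cs : ℂ) + (t : ℂ) * I) * Complex.exp (-(n:ℂ) * ((cs : ℂ) + (t : ℂ) * I) * (L : ℂ))
        = Complex.exp (-((n : ℂ) * (cs : ℂ) * (L : ℂ))) * (Complex.exp (-(n:ℂ) * (t:ℂ) * (L:ℂ) * I) * gF t)
      have hCD : -(n:ℂ) * ((cs : ℂ) + (t : ℂ) * I) * (L : ℂ)
          = -((n : ℂ) * (cs : ℂ) * (L : ℂ)) + -(n:ℂ) * (t:ℂ) * (L:ℂ) * I := by ring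
      rw [hCD, Complex.exp_add, hgF]
      ring
    rw [hsplit] at hfn
    rw [h0, hfn]
    have hsm : ((1 : ℝ) / T) • J = (((1 : ℝ) / T : ℝ) : ℂ) * J := by
      rw [Complex.real_smul]
    rw [hsm]
    have hTC : ((T : ℝ) : ℂ) = 2 * (Real.pi : ℂ) / (-(L : ℂ)) := by
      rw [hTdef]; push_cast; ring
    have hexp : Complex.exp (-((n : ℂ) * (cs : ℂ) * (L : ℂ))) * Complex.exp ((n : ℂ) * (cs : ℂ) * (L : ℂ)) = 1 := by
      rw [← Complex.exp_add]; simp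
    have hexp' : Complex.exp (-((L : ℂ) * (n : ℂ) * (cs : ℂ))) * Complex.exp ((L : ℂ) * (n : ℂ) * (cs : ℂ)) = 1 := by
      rw [← Complex.exp_add]; simp
    push_cast
    rw [hTC]
    field_simp
    linear_combination J * hexp'
  -- summability
  obtain ⟨M₁, hM₁0, hM₁⟩ := qm_bound q a b hq hq1 F hF ((a + cs)/2) (by linarith) (by linarith)
  obtain ⟨M₂, hM₂0, hM₂⟩ := qm_bound q a b hq hq1 F hF ((cs + b)/2) (by linarith) (by linarith)
  set c₁ : ℝ := (a + cs)/2 with hc₁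
  set c₂ : ℝ := (cs + b)/2 with hc₂
  have hfb₁ : ∀ n : ℤ, ‖f (q ^ n)‖ ≤ M₁ * Real.exp (-(n : ℝ) * c₁ * L) := by
    intro n; rw [hrep c₁ (by rw [hc₁]; linarith) (by rw [hc₁]; linarith) n]; exact hM₁ n
  have hfb₂ : ∀ n : ℤ, ‖f (q ^ n)‖ ≤ M₂ * Real.exp (-(n : ℝ) * c₂ * L) := by
    intro n; rw [hrep c₂ (by rw [hc₂]; linarith) (by rw [hc₂]; linarith) n]; exact hM₂ n
  have hcoeffnorm : ∀ n : ℤ, ‖fourierCoeff (⇑φ) (-n)‖ = (1 - q) * ‖f (q ^ n)‖ * Real.exp ((n:ℝ) * cs * L) := by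
    intro n
    rw [hcoeff n, norm_mul, norm_mul]
    congr 1
    · congr 1
      have : (1 : ℂ) - (q : ℂ) = ((1 - q : ℝ) : ℂ) := by push_cast; ring
      rw [this, Complex.norm_real, Real.norm_eq_abs, abs_of_pos (by linarith)]
    · have : (n : ℂ) * (cs : ℂ) * (L : ℂ) = (((n : ℝ) * cs * L : ℝ) : ℂ) := by push_cast; ring
      rw [this, Complex.norm_exp, Complex.ofReal_re]
  have key : ∀ (n : ℤ) (c' M' : ℝ), ‖f (q ^ n)‖ ≤ M' * Real.exp (-(n : ℝ) * c' * L) →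
      ‖fourierCoeff (⇑φ) (-n)‖ ≤ (1 - q) * M' * Real.exp ((n : ℝ) * (cs - c') * L) := by
    intro n c' M' hb
    rw [hcoeffnorm n]
    have step1 : (1 - q) * ‖f (q ^ n)‖ * Real.exp ((n:ℝ) * cs * L)
        ≤ (1 - q) * (M' * Real.exp (-(n : ℝ) * c' * L)) * Real.exp ((n:ℝ) * cs * L) := by
      have := mul_le_mul_of_nonneg_right (mul_le_mul_of_nonneg_left hb
        (by linarith : (0:ℝ) ≤ 1 - q)) (Real.exp_nonneg ((n:ℝ) * cs * L))
      linarith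
    apply le_trans step1
    apply le_of_eq
    rw [show (n : ℝ) * (cs - c') * L = (-(n : ℝ) * c' * L) + ((n:ℝ) * cs * L) by ring,
      Real.exp_add]
    ring
  have hs_pos : Summable (fun k : ℕ => fourierCoeff (⇑φ) (k : ℤ)) := by
    apply Summable.of_norm_bounded (g := fun k : ℕ => ((1-q)*M₂) * (Real.exp ((c₂ - cs) * L))^k)
    · apply Summable.mul_left
      apply summable_geometric_of_lt_one (Real.exp_nonneg _)
      rw [Real.exp_lt_one_iff]
      apply mul_neg_of_pos_of_neg _ hL
      rw [hc₂]; linarith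
    · intro k
      have h1 : (k:ℤ) = -(-(k:ℤ)) := by ring
      rw [h1]
      calc ‖fourierCoeff (⇑φ) (-(-(k:ℤ)))‖
          ≤ (1 - q) * M₂ * Real.exp ((((-(k:ℤ)) : ℤ):ℝ) * (cs - c₂) * L) := key (-(k:ℤ)) c₂ M₂ (hfb₂ _)
        _ = ((1-q)*M₂) * (Real.exp ((c₂ - cs) * L))^k := by
            rw [← Real.exp_nat_mul]
            congr 1
            push_cast
            ring
  have hs_neg : Summable (fun k : ℕ => fourierCoeff (⇑φ) (-(k : ℤ))) := by
    apply Summable.of_norm_bounded (g := fun k : ℕ => ((1-q)*M₁) * (Real.exp ((cs - c₁) * L))^k)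
    · apply Summable.mul_left
      apply summable_geometric_of_lt_one (Real.exp_nonneg _)
      rw [Real.exp_lt_one_iff]
      apply mul_neg_of_pos_of_neg _ hL
      rw [hc₁]; linarith
    · intro k
      calc ‖fourierCoeff (⇑φ) (-(k:ℤ))‖
          ≤ (1 - q) * M₁ * Real.exp ((((k:ℤ)):ℝ) * (cs - c₁) * L) := key (k:ℤ) c₁ M₁ (hfb₁ _)
        _ = ((1-q)*M₁) * (Real.exp ((cs - c₁) * L))^k := by
            rw [← Real.exp_nat_mul]
            congr 1
            push_cast
            ring
  have hsummable : Summable (fourierCoeff (⇑φ)) := Summable.of_nat_of_neg hs_pos hs_neg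
  -- pointwise Fourier inversion
  have hsum := has_pointwise_sum_fourier_series_of_summable hsummable ((τ : ℝ) : AddCircle T)
  have hFs : φ ((τ : ℝ) : AddCircle T) = F s := by
    rw [hφcoe τ, hgF]
    simp only [hcs, hτ]
    rw [Complex.re_add_im]
  rw [hFs] at hsum
  have hsum2 := ((Equiv.neg ℤ).hasSum_iff).mpr hsum
  have hterm : ∀ n : ℤ, (fun m => fourierCoeff (⇑φ) m • (fourier m ((τ : ℝ) : AddCircle T) : ℂ)) ((Equiv.neg ℤ) n)
      = (1 - (q : ℂ)) * (f (q ^ n) * (q : ℂ) ^ ((n : ℂ) * s)) := by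
    intro n
    show fourierCoeff (⇑φ) (-n) • (fourier (-n) ((τ : ℝ) : AddCircle T) : ℂ) = _
    rw [smul_eq_mul, hcoeff n, fourier_coe_apply, hcpow ((n : ℂ) * s)]
    have hs' : (s : ℂ) = (cs : ℂ) + (τ : ℂ) * I := by
      rw [hcs, hτ, Complex.re_add_im]
    have harg : 2 * (Real.pi : ℂ) * I * (-n : ℤ) * (τ : ℂ) / ((T : ℝ) : ℂ) = (n : ℂ) * (τ : ℂ) * (L : ℂ) * I := by
      have hTC : ((T : ℝ) : ℂ) = 2 * (Real.pi : ℂ) / (-(L : ℂ)) := by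
        rw [hTdef]; push_cast; ring
      rw [hTC]
      push_cast
      field_simp
    rw [harg]
    have hexp2 : Complex.exp ((n:ℂ) * (cs:ℂ) * (L:ℂ)) * Complex.exp ((n:ℂ) * (τ:ℂ) * (L:ℂ) * I)
        = Complex.exp (((n:ℂ) * s) * (L:ℂ)) := by
      rw [← Complex.exp_add]
      congr 1
      rw [hs']
      ring
    linear_combination (1 - (q:ℂ)) * f (q ^ n) * hexp2
  have hsum3 : HasSum (fun n : ℤ => (1 - (q : ℂ)) * (f (q ^ n) * (q : ℂ) ^ ((n : ℂ) * s))) (F s) := by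
    convert hsum2 using 1
    funext n
    first
    | exact (hterm n).symm
    | exact hterm n
  rw [qMellin, ← tsum_mul_left]
  exact hsum3.tsum_eq
end

section
/- Mera approximation for 1/(1+x): for s with 0 < Re(s) < 1, the symmetric sums M_q^N(s) = -((1-q)/log q) ∑_{|n|≤N} π / sin(π(s + 2πin/log q)) converge absolutely and uniformly on compact sets in the strip as N → ∞, and the limit equals (1-q) ∑_{m∈ℤ} q^{ms}/(1+q^m). -/
open Complex Filter

namespace MeraAux

open MeasureTheory Asymptotics Set
open scoped FourierTransform

lemma norm_sin_ge (w : ℂ) (h : 2 ≤ Real.exp |w.im|) :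
    Real.exp |w.im| / 4 ≤ ‖Complex.sin w‖ := by
  have e1 : ‖Complex.exp (-w * I)‖ = Real.exp w.im := by
    rw [Complex.norm_exp]; simp
  have e2 : ‖Complex.exp (w * I)‖ = Real.exp (-w.im) := by
    rw [Complex.norm_exp]; simp
  have hs : ‖Complex.sin w‖ = ‖Complex.exp (-w * I) - Complex.exp (w * I)‖ / 2 := by
    rw [Complex.sin]
    rw [norm_div, norm_mul, Complex.norm_I, mul_one]
    norm_num
  have hd : |Real.exp w.im - Real.exp (-w.im)| ≤ ‖Complex.exp (-w * I) - Complex.exp (w * I)‖ := by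
    calc |Real.exp w.im - Real.exp (-w.im)|
        = |‖Complex.exp (-w * I)‖ - ‖Complex.exp (w * I)‖| := by rw [e1, e2]
      _ ≤ ‖Complex.exp (-w * I) - Complex.exp (w * I)‖ := abs_norm_sub_norm_le _ _
  have habs : Real.exp |w.im| - Real.exp (-|w.im|) ≤ |Real.exp w.im - Real.exp (-w.im)| := by
    rcases abs_cases w.im with ⟨h1, _⟩ | ⟨h1, _⟩
    · rw [h1]; exact le_abs_self _
    · rw [h1, neg_neg]; rw [abs_sub_comm]; exact le_abs_self _
  have key : Real.exp |w.im| / 2 ≤ Real.exp |w.im| - Real.exp (-|w.im|) := by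
    have h2 : Real.exp (-|w.im|) ≤ Real.exp |w.im| / 2 := by
      rw [Real.exp_neg]
      rw [inv_le_iff_one_le_mul₀ (Real.exp_pos _)]
      nlinarith [Real.exp_pos |w.im|]
    linarith
  rw [hs]
  have := habs.trans hd
  linarith

lemma norm_pi_div_sin_le (w : ℂ) (h : 2 ≤ Real.exp |w.im|) :
    ‖(Real.pi : ℂ) / Complex.sin w‖ ≤ 4 * Real.pi * Real.exp (-|w.im|) := by
  have h4 : (0:ℝ) < Real.exp |w.im| / 4 := by positivity
  have hb := norm_sin_ge w h
  rw [norm_div]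
  have hppos := Real.pi_pos
  have hnp : ‖(Real.pi : ℂ)‖ = Real.pi := by
    rw [Complex.norm_real, Real.norm_eq_abs, abs_of_pos hppos]
  rw [hnp]
  rw [div_le_iff₀ (lt_of_lt_of_le h4 hb)]
  rw [Real.exp_neg]
  rw [mul_comm]
  calc Real.pi = Real.exp |w.im| / 4 * (4 * Real.pi * (Real.exp |w.im|)⁻¹) := by field_simp
    _ ≤ ‖Complex.sin w‖ * (4 * Real.pi * (Real.exp |w.im|)⁻¹) := by
        apply mul_le_mul_of_nonneg_right hb; positivity

lemma sigma_deriv (x : ℝ) :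
    HasDerivAt (fun x : ℝ => Real.exp x / (1 + Real.exp x))
      (Real.exp x / (1 + Real.exp x) ^ 2) x := by
  have hD : (1 : ℝ) + Real.exp x ≠ 0 := by positivity
  have h := (Real.hasDerivAt_exp x).div ((Real.hasDerivAt_exp x).const_add 1) hD
  exact h.congr_deriv (by ring)

lemma cpow_pos_real {a : ℝ} (ha : 0 < a) (w : ℂ) :
    (a : ℂ) ^ w = Complex.exp (w * (Real.log a : ℂ)) := by
  rw [Complex.cpow_def_of_ne_zero (by exact_mod_cast ha.ne'), Complex.ofReal_log ha.le]
  ring_nf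

lemma integral_exp_div (s : ℂ) (h0 : 0 < s.re) (h1 : s.re < 1) :
    ∫ x : ℝ, Complex.exp (s * x) / (1 + Complex.exp x) =
      (Real.pi : ℂ) / Complex.sin (Real.pi * s) := by
  have h1s : 0 < (1 - s).re := by simp [Complex.sub_re]; linarith
  have hbeta : (Real.pi : ℂ) / Complex.sin (Real.pi * s) = Complex.betaIntegral s (1 - s) := by
    have h2 := Complex.Gamma_mul_Gamma_eq_betaIntegral h0 h1s
    rw [add_sub_cancel, Complex.Gamma_one, one_mul] at h2
    rw [← h2, Complex.Gamma_mul_Gamma_one_sub]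
  set σ : ℝ → ℝ := fun x => Real.exp x / (1 + Real.exp x) with hσ
  set σ' : ℝ → ℝ := fun x => Real.exp x / (1 + Real.exp x) ^ 2 with hσ'
  set g : ℝ → ℂ := fun y => (y : ℂ) ^ (s - 1) * (1 - (y : ℂ)) ^ (-s) with hg
  have himg : σ '' univ = Ioo 0 1 := by
    ext y
    simp only [image_univ, mem_range, mem_Ioo]
    constructor
    · rintro ⟨x, rfl⟩
      have hE := Real.exp_pos x
      constructor
      · positivity
      · rw [div_lt_one (by positivity)]; linarith
    · rintro ⟨hy0, hy1⟩
      refine ⟨Real.log (y / (1 - y)), ?_⟩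
      have h1y : (0:ℝ) < 1 - y := by linarith
      have h2 : (0:ℝ) < y / (1 - y) := div_pos hy0 h1y
      simp only [hσ, Real.exp_log h2]
      have hden : (1 + y / (1 - y)) = 1 / (1-y) := by field_simp; ring
      rw [hden]
      field_simp
  have hderiv : ∀ x ∈ (univ : Set ℝ), HasDerivWithinAt σ (σ' x) univ x :=
    fun x _ => (sigma_deriv x).hasDerivWithinAt
  have hinj : InjOn σ univ := by
    intro a _ b _ hab
    simp only [hσ] at hab
    have hDa : (0:ℝ) < 1 + Real.exp a := by positivity
    have hDb : (0:ℝ) < 1 + Real.exp b := by positivity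
    rw [div_eq_div_iff hDa.ne' hDb.ne'] at hab
    have : Real.exp a = Real.exp b := by ring_nf at hab; nlinarith
    exact Real.exp_injective this
  have hchg := integral_image_eq_integral_abs_deriv_smul MeasurableSet.univ hderiv hinj g
  rw [himg, Measure.restrict_univ] at hchg
  have hpt : ∀ x : ℝ, |σ' x| • g (σ x) = Complex.exp (s * x) / (1 + Complex.exp x) := by
    intro x
    have hE := Real.exp_pos x
    have hD : (0:ℝ) < 1 + Real.exp x := by positivity
    have hσx : (0:ℝ) < σ x := by simp only [hσ]; positivity
    have hr : 1 - σ x = (1 + Real.exp x)⁻¹ := by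
      rw [hσ]; field_simp; ring
    have h1σ : 1 - (σ x : ℂ) = (((1 + Real.exp x)⁻¹ : ℝ) : ℂ) := by
      rw [← hr]; push_cast; ring
    have hlog1 : Real.log (σ x) = x - Real.log (1 + Real.exp x) := by
      rw [hσ, Real.log_div hE.ne' hD.ne', Real.log_exp]
    have hlog2 : Real.log (1 + Real.exp x)⁻¹ = -Real.log (1 + Real.exp x) := Real.log_inv _
    have habs : |σ' x| = Real.exp x / (1 + Real.exp x) ^ 2 := by
      rw [hσ', abs_of_pos (by positivity)]
    simp only [hg]
    rw [h1σ, cpow_pos_real hσx, cpow_pos_real (by positivity : (0:ℝ) < (1 + Real.exp x)⁻¹),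
      hlog1, hlog2, habs]
    rw [real_smul]
    set L := Real.log (1 + Real.exp x)
    rw [← Complex.exp_add]
    have hexp : (s - 1) * ((x : ℂ) - (L : ℂ)) + -s * (-(L : ℂ)) = (s - 1) * x + L := by ring
    push_cast
    rw [hexp]
    have hcD : (1 : ℂ) + Complex.exp x = ((1 + Real.exp x : ℝ) : ℂ) := by
      push_cast [← Complex.ofReal_exp]
      ring
    have hL : Complex.exp (L : ℂ) = ((1 + Real.exp x : ℝ) : ℂ) := by
      rw [← Complex.ofReal_exp, Real.exp_log hD]
    have hne : (1 : ℂ) + Complex.exp (x : ℂ) ≠ 0 := by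
      rw [hcD]; exact_mod_cast hD.ne'
    rw [Complex.exp_add, hL, ← hcD]
    field_simp
    rw [← Complex.exp_add]
    ring_nf
  rw [hbeta, Complex.betaIntegral]
  have hexp1 : (1 : ℂ) - s - 1 = -s := by ring
  rw [intervalIntegral.integral_of_le zero_le_one]
  rw [MeasureTheory.integral_Ioc_eq_integral_Ioo]
  simp_rw [hexp1]
  rw [show (∫ x in Ioo (0:ℝ) 1, (x:ℂ)^(s-1) * (1-(x:ℂ))^(-s)) = ∫ x in Ioo (0:ℝ) 1, g x from rfl]
  rw [hchg]
  exact (integral_congr_ae (Eventually.of_forall hpt)).symm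

lemma fourier_f (t : ℝ) (ht : t < 0) (s : ℂ) (h0 : 0 < s.re) (h1 : s.re < 1) (ξ : ℝ) :
    𝓕 (fun x : ℝ => Complex.exp ((t:ℂ) * s * x) / (1 + Complex.exp ((t:ℂ) * x))) ξ
      = ((-1/t : ℝ) : ℂ) *
        ((Real.pi:ℂ) / Complex.sin (Real.pi * (s - 2 * Real.pi * I * ξ / t))) := by
  have htne : (t:ℂ) ≠ 0 := by exact_mod_cast ht.ne
  set w : ℂ := s - 2 * Real.pi * I * ξ / t with hw
  have hwre : w.re = s.re := by
    have : (2 * (Real.pi:ℂ) * I * ξ / t) = ((2 * Real.pi * ξ / t : ℝ) : ℂ) * I := by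
      push_cast; field_simp
    rw [hw, this]
    simp
  set h : ℝ → ℂ := fun y => Complex.exp (w * y) / (1 + Complex.exp y) with hh
  have hpt : ∀ v : ℝ,
      Complex.exp (((-2 * Real.pi * v * ξ : ℝ) : ℂ) * I) •
        (Complex.exp ((t:ℂ) * s * v) / (1 + Complex.exp ((t:ℂ) * v))) = h (t * v) := by
    intro v
    rw [smul_eq_mul]
    simp only [hh]
    push_cast
    rw [mul_div_assoc', ← Complex.exp_add]
    congr 2
    rw [hw]
    field_simp
    ring
  rw [Real.fourier_real_eq_integral_exp_smul]
  rw [integral_congr_ae (Eventually.of_forall hpt)]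
  rw [MeasureTheory.Measure.integral_comp_mul_left h t]
  rw [integral_exp_div w (by rw [hwre]; exact h0) (by rw [hwre]; exact h1)]
  have habs : |t⁻¹| = -1/t := by
    rw [abs_of_neg (inv_neg''.mpr ht)]
    field_simp
  rw [habs, real_smul]

lemma cube_le_exp {y : ℝ} (hy : 0 ≤ y) : y ^ 3 / 27 ≤ Real.exp y := by
  have h3 : Real.exp y = Real.exp (y / 3) ^ 3 := by
    rw [← Real.exp_nat_mul]
    push_cast
    ring_nf
  have hb : y / 3 ≤ Real.exp (y / 3) := (by linarith : y/3 ≤ y/3 + 1).trans (by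
    have := Real.add_one_le_exp (y/3); linarith)
  have := pow_le_pow_left₀ (by positivity) hb 3
  rw [h3]
  calc y^3/27 = (y/3)^3 := by ring
    _ ≤ _ := this

lemma eventually_cocompact_abs {p : ℝ → Prop} (M : ℝ) (h : ∀ x : ℝ, M ≤ |x| → p x) :
    ∀ᶠ x in cocompact ℝ, p x := by
  rw [cocompact_eq_atBot_atTop, eventually_sup]
  constructor
  · filter_upwards [eventually_le_atBot (-M)] with x hx
    exact h x (le_trans (by linarith) (neg_le_abs x))
  · filter_upwards [eventually_ge_atTop M] with x hx
    exact h x (hx.trans (le_abs_self x))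

lemma isBigO_exp_decay {F : ℝ → ℂ} (c C : ℝ) (hc : 0 < c)
    (h : ∀ᶠ x in cocompact ℝ, ‖F x‖ ≤ C * Real.exp (-(c * |x|))) :
    F =O[cocompact ℝ] (fun x : ℝ => |x| ^ (-2 : ℝ)) := by
  have h1 : F =O[cocompact ℝ] (fun x => Real.exp (-(c * |x|))) := by
    apply IsBigO.of_bound C
    filter_upwards [h] with x hx
    simpa [Real.abs_exp] using hx
  refine h1.trans (IsBigO.of_bound 1 ?_)
  apply eventually_cocompact_abs (max 1 (27 / c ^ 3))
  intro x hx
  have hx1 : (1:ℝ) ≤ |x| := le_trans (le_max_left _ _) hx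
  have hx2 : 27 / c ^ 3 ≤ |x| := le_trans (le_max_right _ _) hx
  have hxpos : (0:ℝ) < |x| := by linarith
  have hkey : |x| ^ 2 ≤ Real.exp (c * |x|) := by
    have h1 := cube_le_exp (by positivity : (0:ℝ) ≤ c * |x|)
    have h2 : |x| ^ 2 ≤ (c * |x|) ^ 3 / 27 := by
      have : 27 / c ^ 3 * |x| ^ 2 ≤ |x| * |x| ^ 2 :=
        mul_le_mul_of_nonneg_right hx2 (by positivity)
      have hc3 : (0:ℝ) < c ^ 3 := by positivity
      rw [div_mul_eq_mul_div, div_le_iff₀ hc3] at this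
      calc |x| ^ 2 = 27 * |x| ^ 2 / 27 := by ring
        _ ≤ |x| * |x| ^ 2 * c ^ 3 / 27 := by linarith [this]
        _ = (c * |x|) ^ 3 / 27 := by ring
    exact h2.trans h1
  have hrw : |x| ^ (-2:ℝ) = (|x| ^ 2)⁻¹ := by
    rw [show (-2:ℝ) = -(2:ℕ) by norm_num, Real.rpow_neg (abs_nonneg x), Real.rpow_natCast]
  rw [Real.norm_eq_abs, Real.abs_exp, Real.norm_eq_abs, hrw, one_mul,
    _root_.abs_of_nonneg (by positivity : (0:ℝ) ≤ (|x|^2)⁻¹)]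
  rw [Real.exp_neg]
  exact inv_anti₀ (by positivity) hkey

lemma den_eq (y : ℝ) : (1 : ℂ) + Complex.exp (y : ℂ) = ((1 + Real.exp y : ℝ) : ℂ) := by
  push_cast [← Complex.ofReal_exp]; ring

lemma f_norm_le (t : ℝ) (s : ℂ) : ∀ x : ℝ,
    ‖Complex.exp ((t:ℂ) * s * x) / (1 + Complex.exp ((t:ℂ) * x))‖ ≤
      Real.exp (-(min (-t * s.re) (-t * (1 - s.re)) * |x|)) := by
  intro x
  have hEt : (0:ℝ) < Real.exp (t * x) := Real.exp_pos _
  have hnum : ‖Complex.exp ((t:ℂ) * s * x)‖ = Real.exp (t * s.re * x) := by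
    rw [Complex.norm_exp]
    congr 1
    simp [Complex.mul_re, Complex.mul_im]
    try ring
  have hden : ‖(1 : ℂ) + Complex.exp ((t:ℂ) * x)‖ = 1 + Real.exp (t * x) := by
    rw [show ((t:ℂ) * x) = ((t * x : ℝ) : ℂ) by push_cast; ring, den_eq,
      Complex.norm_real, Real.norm_eq_abs, _root_.abs_of_pos (by positivity)]
  rw [norm_div, hnum, hden]
  set c := min (-t * s.re) (-t * (1 - s.re)) with hc
  rcases le_or_gt 0 x with hx | hx
  · calc Real.exp (t * s.re * x) / (1 + Real.exp (t * x)) ≤ Real.exp (t * s.re * x) :=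
          div_le_self (Real.exp_pos _).le (by linarith)
      _ ≤ Real.exp (-(c * |x|)) := by
          apply Real.exp_le_exp.mpr
          rw [_root_.abs_of_nonneg hx]
          have : c ≤ -t * s.re := min_le_left _ _
          nlinarith
  · calc Real.exp (t * s.re * x) / (1 + Real.exp (t * x))
        ≤ Real.exp (t * s.re * x) / Real.exp (t * x) := by
          exact div_le_div_of_nonneg_left (Real.exp_pos _).le hEt (by linarith)
      _ = Real.exp (t * s.re * x - t * x) := by rw [← Real.exp_sub]
      _ ≤ Real.exp (-(c * |x|)) := by
          apply Real.exp_le_exp.mpr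
          rw [_root_.abs_of_neg hx]
          have : c ≤ -t * (1 - s.re) := min_le_right _ _
          nlinarith

lemma term_bound_pt (t : ℝ) (ht : t < 0) (M ξ : ℝ) (hM : 0 ≤ M)
    (hξ : (Real.pi * M + 1) / (-2 * Real.pi ^ 2 / t) ≤ |ξ|) (s : ℂ) (hsim : |s.im| ≤ M) :
    ‖(Real.pi:ℂ) / Complex.sin (Real.pi * (s + 2 * Real.pi * I * (ξ:ℂ) / t))‖ ≤
      4 * Real.pi * Real.exp (Real.pi * M) * Real.exp (-((-2 * Real.pi ^ 2 / t) * |ξ|)) := by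
  set r : ℝ := -2 * Real.pi ^ 2 / t with hr
  have hrpos : 0 < r := by
    rw [hr]
    apply div_pos_of_neg_of_neg _ ht
    nlinarith [Real.pi_pos]
  have htne : t ≠ 0 := ht.ne
  set w : ℂ := Real.pi * (s + 2 * Real.pi * I * (ξ:ℂ) / t) with hw
  have hwim : w.im = Real.pi * s.im - r * ξ := by
    have hcast : (2 * (Real.pi:ℂ) * I * (ξ:ℂ) / t) = ((2 * Real.pi * ξ / t : ℝ) : ℂ) * I := by
      push_cast
      field_simp
    rw [hw, hcast]
    rw [Complex.im_ofReal_mul, Complex.add_im, Complex.im_ofReal_mul, Complex.I_im]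
    rw [hr]
    field_simp
    ring
  have him : r * |ξ| - Real.pi * M ≤ |w.im| := by
    rw [hwim]
    have h2' := abs_sub_abs_le_abs_sub (r * ξ) (Real.pi * s.im)
    have h3' : |Real.pi * s.im - r * ξ| = |r * ξ - Real.pi * s.im| := abs_sub_comm _ _
    have h4' : |r * ξ| = r * |ξ| := by rw [abs_mul, _root_.abs_of_pos hrpos]
    have h5' : |Real.pi * s.im| ≤ Real.pi * M := by
      rw [abs_mul, _root_.abs_of_pos Real.pi_pos]
      exact mul_le_mul_of_nonneg_left hsim Real.pi_pos.le
    rw [h3']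
    calc r * |ξ| - Real.pi * M ≤ |r * ξ| - |Real.pi * s.im| := by
          rw [h4']; linarith
      _ ≤ |r * ξ - Real.pi * s.im| := h2'
  have hone : 1 ≤ |w.im| := by
    have : (Real.pi * M + 1) ≤ r * |ξ| := by
      rw [div_le_iff₀ hrpos] at hξ
      linarith
    linarith
  have hexp2 : 2 ≤ Real.exp |w.im| := by
    have := Real.add_one_le_exp 1
    calc (2:ℝ) = 1 + 1 := by norm_num
      _ ≤ Real.exp 1 := by linarith
      _ ≤ Real.exp |w.im| := Real.exp_le_exp.mpr hone
  have hb := norm_pi_div_sin_le w hexp2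
  have hfinal : Real.exp (-|w.im|) ≤ Real.exp (Real.pi * M) * Real.exp (-(r * |ξ|)) := by
    rw [← Real.exp_add]
    apply Real.exp_le_exp.mpr
    linarith
  calc ‖(Real.pi:ℂ) / Complex.sin w‖ ≤ 4 * Real.pi * Real.exp (-|w.im|) := hb
    _ ≤ 4 * Real.pi * (Real.exp (Real.pi * M) * Real.exp (-(r * |ξ|))) :=
        mul_le_mul_of_nonneg_left hfinal (by positivity)
    _ = 4 * Real.pi * Real.exp (Real.pi * M) * Real.exp (-(r * |ξ|)) := by ring

lemma fourier_bound (t : ℝ) (ht : t < 0) (s : ℂ) (h0 : 0 < s.re) (h1 : s.re < 1) :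
    ∃ C : ℝ, ∀ᶠ ξ in cocompact ℝ,
    ‖𝓕 (fun x : ℝ => Complex.exp ((t:ℂ) * s * x) / (1 + Complex.exp ((t:ℂ) * x))) ξ‖ ≤
      C * Real.exp (-(( -2 * Real.pi ^ 2 / t) * |ξ|)) := by
  set r : ℝ := -2 * Real.pi ^ 2 / t with hr
  have hrpos : 0 < r := by
    rw [hr]
    apply div_pos_of_neg_of_neg _ ht
    nlinarith [Real.pi_pos]
  have hinv : (0:ℝ) < -1/t := div_pos_of_neg_of_neg (by norm_num) ht
  refine ⟨(-1/t) * (4 * Real.pi * Real.exp (Real.pi * |s.im|)), ?_⟩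
  apply eventually_cocompact_abs ((Real.pi * |s.im| + 1) / r)
  intro ξ hξ
  rw [fourier_f t ht s h0 h1 ξ]
  rw [norm_mul]
  have hn1 : ‖((-1/t : ℝ) : ℂ)‖ = -1/t := by
    rw [Complex.norm_real, Real.norm_eq_abs, _root_.abs_of_pos hinv]
  rw [hn1]
  have hterm : ‖(Real.pi:ℂ) / Complex.sin (Real.pi * (s + 2 * Real.pi * I * ((-ξ:ℝ):ℂ) / t))‖ ≤
      4 * Real.pi * Real.exp (Real.pi * |s.im|) * Real.exp (-(r * |(-ξ:ℝ)|)) := by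
    apply term_bound_pt t ht |s.im| (-ξ) (abs_nonneg _) _ s le_rfl
    rw [abs_neg]
    exact hξ
  rw [abs_neg] at hterm
  have harg : Real.pi * (s + 2 * Real.pi * I * ((-ξ:ℝ):ℂ) / t) =
      Real.pi * (s - 2 * Real.pi * I * (ξ:ℂ) / t) := by
    push_cast
    ring
  rw [harg] at hterm
  calc -1/t * ‖(Real.pi:ℂ) / Complex.sin (Real.pi * (s - 2 * Real.pi * I * (ξ:ℂ) / t))‖
      ≤ -1/t * (4 * Real.pi * Real.exp (Real.pi * |s.im|) * Real.exp (-(r * |ξ|))) :=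
        mul_le_mul_of_nonneg_left hterm hinv.le
    _ = -1/t * (4 * Real.pi * Real.exp (Real.pi * |s.im|)) * Real.exp (-(r * |ξ|)) := by ring

lemma poisson_key (t : ℝ) (ht : t < 0) (s : ℂ) (h0 : 0 < s.re) (h1 : s.re < 1) :
    ∑' n : ℤ, Complex.exp ((t:ℂ) * s * (n:ℝ)) / (1 + Complex.exp ((t:ℂ) * (n:ℝ))) =
      ∑' n : ℤ, ((-1/t : ℝ) : ℂ) *
        ((Real.pi:ℂ) / Complex.sin (Real.pi * (s + 2 * Real.pi * I * (n:ℂ) / t))) := by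
  set f : ℝ → ℂ := fun x => Complex.exp ((t:ℂ) * s * x) / (1 + Complex.exp ((t:ℂ) * x)) with hf
  have hcont : Continuous f := by
    apply Continuous.div
    · exact Complex.continuous_exp.comp (by continuity)
    · exact continuous_const.add (Complex.continuous_exp.comp (by continuity))
    · intro x
      rw [show ((t:ℂ) * x) = ((t * x : ℝ) : ℂ) by push_cast; ring, den_eq]
      exact_mod_cast (by positivity : (0:ℝ) < 1 + Real.exp (t * x)).ne'
  have hcpos : 0 < min (-t * s.re) (-t * (1 - s.re)) := by
    apply lt_min <;> nlinarith
  have hfO : f =O[cocompact ℝ] (fun x : ℝ => |x| ^ (-2 : ℝ)) := by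
    apply isBigO_exp_decay _ 1 hcpos
    apply Eventually.of_forall
    intro x
    rw [one_mul]
    exact f_norm_le t s x
  have hFfO : (𝓕 f) =O[cocompact ℝ] (fun x : ℝ => |x| ^ (-2 : ℝ)) := by
    obtain ⟨C, hC⟩ := fourier_bound t ht s h0 h1
    have hrpos : 0 < -2 * Real.pi ^ 2 / t := by
      apply div_pos_of_neg_of_neg _ ht
      nlinarith [Real.pi_pos]
    exact isBigO_exp_decay _ C hrpos hC
  have hpoisson := Real.tsum_eq_tsum_fourier_of_rpow_decay hcont one_lt_two hfO hFfO 0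
  simp only [zero_add] at hpoisson
  rw [hpoisson]
  have hfour : ∀ n : ℤ, (fourier n ((0:ℝ) : UnitAddCircle) : ℂ) = 1 := by
    intro n
    norm_num
  calc ∑' n : ℤ, 𝓕 f n * fourier n ((0:ℝ) : UnitAddCircle)
      = ∑' n : ℤ, ((-1/t : ℝ) : ℂ) *
        ((Real.pi:ℂ) / Complex.sin (Real.pi * (s - 2 * Real.pi * I * ((n:ℝ):ℂ) / t))) := by
        apply tsum_congr
        intro n
        rw [hfour n, mul_one, fourier_f t ht s h0 h1]
    _ = _ := by
        rw [← (Equiv.neg ℤ).tsum_eq]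
        apply tsum_congr
        intro n
        have : (((-n : ℤ) : ℝ) : ℂ) = -(n:ℂ) := by push_cast; ring
        simp only [Equiv.neg_apply, this]
        ring_nf

lemma qmellin_eq (q : ℝ) (hq : 0 < q) (hq1 : q < 1) (s : ℂ) (h0 : 0 < s.re) (h1 : s.re < 1) :
    qMellin q (fun x => 1 / (1 + (x:ℂ))) s =
      ∑' n : ℤ, (-((1:ℂ) - (q:ℂ)) / (Real.log q : ℂ)) *
        ((Real.pi:ℂ) / Complex.sin ((Real.pi:ℂ) * (s + 2 * Real.pi * I * (n:ℂ) / (Real.log q : ℂ)))) := by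
  set t := Real.log q with htdef
  have ht : t < 0 := Real.log_neg hq hq1
  have htne : (t:ℂ) ≠ 0 := by exact_mod_cast ht.ne
  have hqt : q = Real.exp t := (Real.exp_log hq).symm
  have hterm : ∀ n : ℤ, (fun x : ℝ => 1 / (1 + (x:ℂ))) ((q:ℝ) ^ n) * (q:ℂ) ^ ((n:ℂ) * s)
      = Complex.exp ((t:ℂ) * s * ((n:ℤ):ℝ)) / (1 + Complex.exp ((t:ℂ) * ((n:ℤ):ℝ))) := by
    intro n
    have hqn : (q ^ n : ℝ) = Real.exp (t * n) := by
      rw [hqt, ← Real.rpow_intCast (Real.exp t) n,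
        Real.rpow_def_of_pos (Real.exp_pos t), Real.log_exp]
    have h2 : (1 : ℂ) + ((q ^ n : ℝ) : ℂ) = 1 + Complex.exp ((t:ℂ) * ((n:ℤ):ℝ)) := by
      rw [hqn, Complex.ofReal_exp]
      push_cast
      ring_nf
    have h3 : (q:ℂ) ^ ((n:ℂ) * s) = Complex.exp ((t:ℂ) * s * ((n:ℤ):ℝ)) := by
      rw [cpow_pos_real hq, ← htdef]
      congr 1
      push_cast
      ring
    simp only [one_div]
    rw [h3, ← h2]
    rw [inv_mul_eq_div]
  rw [qMellin]
  rw [tsum_congr hterm]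
  rw [poisson_key t ht s h0 h1]
  rw [← tsum_mul_left]
  apply tsum_congr
  intro n
  rw [← mul_assoc]
  congr 1
  push_cast
  field_simp

lemma summable_u (C ρ : ℝ) (hρ0 : 0 ≤ ρ) (hρ1 : ρ < 1) :
    Summable (fun n : ℤ => C * ρ ^ n.natAbs) := by
  apply Summable.mul_left
  apply Summable.of_nat_of_neg
  · simpa using summable_geometric_of_lt_one hρ0 hρ1
  · simpa using summable_geometric_of_lt_one hρ0 hρ1

lemma eventually_cofinite_intabs {p : ℤ → Prop} (B : ℝ) (h : ∀ n : ℤ, B ≤ |(n:ℝ)| → p n) :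
    ∀ᶠ n : ℤ in cofinite, p n := by
  rw [Int.cofinite_eq, eventually_sup]
  constructor
  · filter_upwards [eventually_le_atBot ⌊-B⌋] with n hn
    apply h
    have : (n:ℝ) ≤ -B := Int.le_floor.mp hn
    calc B ≤ -(n:ℝ) := by linarith
      _ ≤ |(n:ℝ)| := neg_le_abs _
  · filter_upwards [eventually_ge_atTop ⌈B⌉] with n hn
    apply h
    have : B ≤ (n:ℝ) := by
      have := Int.ceil_le.mp hn
      exact_mod_cast this
    exact this.trans (le_abs_self _)

lemma exp_natAbs (r : ℝ) (n : ℤ) :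
    Real.exp (-(r * |(n:ℝ)|)) = Real.exp (-r) ^ n.natAbs := by
  rw [← Real.exp_nat_mul]
  congr 1
  have h : ((n.natAbs : ℕ) : ℝ) = |(n:ℝ)| := by
    rw [Nat.cast_natAbs, Int.cast_abs]
  rw [← h]
  ring

end MeraAux

open MeraAux MeasureTheory Asymptotics Set

theorem mera_one_add_inv (q : ℝ) (hq : 0 < q) (hq1 : q < 1) :
    (∀ s : ℂ, 0 < s.re → s.re < 1 →
      Summable (fun n : ℤ =>
        ‖(Real.pi : ℂ) / Complex.sin ((Real.pi : ℂ) * (s + 2 * Real.pi * I * n / Real.log q))‖)) ∧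
    (∀ K : Set ℂ, K ⊆ {s : ℂ | 0 < s.re ∧ s.re < 1} → IsCompact K →
      TendstoUniformlyOn
        (fun (N : ℕ) (s : ℂ) => -((1 : ℂ) - (q : ℂ)) / (Real.log q : ℂ) *
          ∑ n ∈ Finset.Icc (-(N : ℤ)) (N : ℤ),
            (Real.pi : ℂ) / Complex.sin ((Real.pi : ℂ) * (s + 2 * Real.pi * I * n / Real.log q)))
        (fun s => qMellin q (fun x => 1 / (1 + (x : ℂ))) s) atTop K) := by
  have ht : Real.log q < 0 := Real.log_neg hq hq1
  set t := Real.log q with htdef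
  set r : ℝ := -2 * Real.pi ^ 2 / t with hr
  have hrpos : 0 < r := by
    rw [hr]
    apply div_pos_of_neg_of_neg _ ht
    nlinarith [Real.pi_pos]
  set ρ : ℝ := Real.exp (-r) with hρ
  have hρ0 : 0 ≤ ρ := (Real.exp_pos _).le
  have hρ1 : ρ < 1 := by
    rw [hρ]
    exact Real.exp_lt_one_iff.mpr (by linarith)
  have hcast : ∀ n : ℤ, ((n:ℝ):ℂ) = (n:ℂ) := fun n => by push_cast; ring
  constructor
  · intro s hs0 hs1
    apply Summable.of_norm_bounded_eventually
      (g := fun n : ℤ => (4 * Real.pi * Real.exp (Real.pi * |s.im|)) * ρ ^ n.natAbs)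
      (summable_u _ ρ hρ0 hρ1)
    apply eventually_cofinite_intabs ((Real.pi * |s.im| + 1) / r)
    intro n hn
    have hb := term_bound_pt t ht |s.im| (n:ℝ) (abs_nonneg _) hn s le_rfl
    rw [hcast n] at hb
    rw [exp_natAbs r n, ← hρ] at hb
    rw [Real.norm_eq_abs, _root_.abs_of_nonneg (norm_nonneg _)]
    exact hb
  · intro K hK hKc
    rcases K.eq_empty_or_nonempty with rfl | hne
    · exact tendstoUniformlyOn_empty
    obtain ⟨z, hzK, hz⟩ := hKc.exists_isMaxOn hne
      ((continuous_abs.comp Complex.continuous_im).continuousOn)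
    set M : ℝ := |z.im| with hM
    have hM0 : 0 ≤ M := abs_nonneg _
    have hMb : ∀ s ∈ K, |s.im| ≤ M := fun s hs => hz hs
    set c : ℂ := -((1 : ℂ) - (q : ℂ)) / (t : ℂ) with hc
    set g : ℤ → ℂ → ℂ := fun n s => c *
      ((Real.pi : ℂ) / Complex.sin ((Real.pi : ℂ) * (s + 2 * Real.pi * I * (n:ℂ) / (t:ℂ)))) with hg
    have hbound : ∀ᶠ n : ℤ in cofinite, ∀ s ∈ K,
        ‖g n s‖ ≤ (‖c‖ * (4 * Real.pi * Real.exp (Real.pi * M))) * ρ ^ n.natAbs := by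
      apply eventually_cofinite_intabs ((Real.pi * M + 1) / r)
      intro n hn s hs
      have hb := term_bound_pt t ht M (n:ℝ) hM0 hn s (hMb s hs)
      rw [hcast n, exp_natAbs r n] at hb
      rw [← hρ] at hb
      have h2' : ‖g n s‖ = ‖c‖ * ‖(Real.pi : ℂ) / Complex.sin
          ((Real.pi : ℂ) * (s + 2 * Real.pi * I * (n:ℂ) / (t:ℂ)))‖ := by
        rw [hg]; exact norm_mul _ _
      rw [h2', show (‖c‖ * (4 * Real.pi * Real.exp (Real.pi * M))) * ρ ^ n.natAbs =
        ‖c‖ * (4 * Real.pi * Real.exp (Real.pi * M) * ρ ^ n.natAbs) from by ring]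
      exact mul_le_mul_of_nonneg_left hb (norm_nonneg c)
    have huc := tendstoUniformlyOn_tsum_of_cofinite_eventually
      (summable_u (‖c‖ * (4 * Real.pi * Real.exp (Real.pi * M))) ρ hρ0 hρ1) hbound
    have hIcc : Tendsto (fun N : ℕ => Finset.Icc (-(N:ℤ)) (N:ℤ)) atTop atTop := by
      apply tendsto_atTop_finset_of_monotone
      · intro a b hab
        apply Finset.Icc_subset_Icc
        · exact neg_le_neg (by exact_mod_cast hab)
        · exact_mod_cast hab
      · intro n
        exact ⟨n.natAbs, Finset.mem_Icc.mpr ⟨by omega, by omega⟩⟩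
    have hcomp : TendstoUniformlyOn
        (fun (N : ℕ) (s : ℂ) => ∑ n ∈ Finset.Icc (-(N:ℤ)) (N:ℤ), g n s)
        (fun s => ∑' n : ℤ, g n s) atTop K :=
      fun u hu => hIcc.eventually (huc u hu)
    have hF : ∀ N : ℕ, Set.EqOn
        (fun s : ℂ => ∑ n ∈ Finset.Icc (-(N:ℤ)) (N:ℤ), g n s)
        (fun s : ℂ => -((1 : ℂ) - (q : ℂ)) / (t : ℂ) *
          ∑ n ∈ Finset.Icc (-(N : ℤ)) (N : ℤ),
            (Real.pi : ℂ) / Complex.sin ((Real.pi : ℂ) * (s + 2 * Real.pi * I * n / (t:ℂ)))) K := by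
      intro N s _
      simp only [hg, hc]
      rw [Finset.mul_sum]
    have hlim : Set.EqOn (fun s => ∑' n : ℤ, g n s)
        (fun s => qMellin q (fun x => 1 / (1 + (x : ℂ))) s) K := by
      intro s hs
      have hstrip := hK hs
      exact (qmellin_eq q hq hq1 s hstrip.1 hstrip.2).symm
    exact (hcomp.congr (Eventually.of_forall hF)).congr_right hlim
end

section
/- The residues of ψ(s) = Γ_q(s)Γ_q(1-s)φ(-s)x^{-s} at its simple poles s = -n (n = 0,1,2,...) are Res(ψ,-n) = ((1-q)/log q) · q^{n(n+1)/2} (-1)^{n+1} φ(n) x^n, for any function φ analytic at the points n and any x > 0. -/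
open Complex Filter

section helpers

variable {q : ℝ}

lemma norm_q_pow (hq : 0 < q) (k : ℕ) : ‖((q:ℂ)) ^ k‖ = q ^ k := by
  rw [norm_pow, Complex.norm_real, Real.norm_eq_abs, abs_of_pos hq]

lemma factor_ne_zero (hq : 0 < q) (hq1 : q < 1) {a : ℂ} (ha : ‖a‖ < 1) (k : ℕ) :
    1 - a * (q : ℂ) ^ k ≠ 0 := by
  intro h
  have h1 : a * (q:ℂ)^k = 1 := by linear_combination -h
  have h2 : ‖a * (q:ℂ)^k‖ < 1 := by
    rw [norm_mul, norm_q_pow hq]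
    calc ‖a‖ * q ^ k ≤ ‖a‖ * 1 := by
          gcongr
          exact pow_le_one₀ hq.le hq1.le
      _ = ‖a‖ := mul_one _
      _ < 1 := ha
  rw [h1] at h2
  simp at h2

lemma norm_log_le (hq : 0 < q) (hq1 : q < 1) {z : ℂ} {r : ℝ} (hr : r < 1) (hz : ‖z‖ ≤ r)
    (k : ℕ) : ‖Complex.log (1 - z * (q:ℂ) ^ k)‖ ≤ ((1 - r)⁻¹ / 2 + 1) * (r * q ^ k) := by
  set w := z * (q:ℂ) ^ k with hw
  have hr0 : 0 ≤ r := le_trans (norm_nonneg z) hz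
  have hqk1 : q ^ k ≤ 1 := pow_le_one₀ hq.le hq1.le
  have hwr : ‖w‖ ≤ r * q ^ k := by
    rw [hw, norm_mul, norm_q_pow hq]
    gcongr
  have hwr' : ‖w‖ ≤ r := le_trans hwr (by nlinarith [pow_pos hq k])
  have hw1 : ‖w‖ < 1 := lt_of_le_of_lt hwr' hr
  have hb := Complex.norm_log_one_add_le (z := -w) (by simpa using hw1)
  have h1 : (1 : ℂ) + -w = 1 - w := by ring
  rw [h1] at hb
  rw [norm_neg] at hb
  have hinv : (1 - ‖w‖)⁻¹ ≤ (1 - r)⁻¹ := inv_anti₀ (by linarith) (by linarith)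
  have hinv0 : 0 ≤ (1 - ‖w‖)⁻¹ := le_of_lt (inv_pos.2 (by linarith))
  have hinv0' : 0 ≤ (1 - r)⁻¹ := le_of_lt (inv_pos.2 (by linarith))
  calc ‖Complex.log (1 - w)‖ ≤ ‖w‖ ^ 2 * (1 - ‖w‖)⁻¹ / 2 + ‖w‖ := hb
    _ ≤ (r * q ^ k) * (1 * (1 - r)⁻¹) / 2 + r * q ^ k := by
        have : ‖w‖ ^ 2 * (1 - ‖w‖)⁻¹ ≤ (r * q ^ k) * (1 * (1 - r)⁻¹) := by
          have h2 : ‖w‖ ^ 2 ≤ (r * q ^ k) * 1 := by nlinarith [norm_nonneg w]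
          calc ‖w‖ ^ 2 * (1 - ‖w‖)⁻¹ ≤ ((r * q ^ k) * 1) * (1 - r)⁻¹ := by
                apply mul_le_mul h2 hinv hinv0 (by positivity)
            _ = (r * q ^ k) * (1 * (1 - r)⁻¹) := by ring
        linarith
    _ = ((1 - r)⁻¹ / 2 + 1) * (r * q ^ k) := by ring

lemma summable_log (hq : 0 < q) (hq1 : q < 1) {a : ℂ} (ha : ‖a‖ < 1) :
    Summable fun k : ℕ => Complex.log (1 - a * (q : ℂ) ^ k) := by
  apply Summable.of_norm
  have hgeo : Summable (fun k : ℕ => ((1 - ‖a‖)⁻¹ / 2 + 1) * (‖a‖ * q ^ k)) := by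
    exact ((summable_geometric_of_lt_one hq.le hq1).mul_left _).mul_left _
  apply Summable.of_nonneg_of_le (fun k => norm_nonneg _) (fun k => ?_) hgeo
  exact norm_log_le hq hq1 ha le_rfl k

lemma qPochInf_hasProd (hq : 0 < q) (hq1 : q < 1) {a : ℂ} (ha : ‖a‖ < 1) :
    HasProd (fun k : ℕ => 1 - a * (q:ℂ) ^ k)
      (cexp (∑' k : ℕ, Complex.log (1 - a * (q:ℂ) ^ k))) := by
  have h := (summable_log hq hq1 ha).hasSum.cexp
  exact h.congr_fun fun k => (Complex.exp_log (factor_ne_zero hq hq1 ha k)).symm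

lemma qPochInf_eq_exp (hq : 0 < q) (hq1 : q < 1) {a : ℂ} (ha : ‖a‖ < 1) :
    qPochInf a q = cexp (∑' k : ℕ, Complex.log (1 - a * (q:ℂ) ^ k)) :=
  (qPochInf_hasProd hq hq1 ha).tprod_eq

lemma qPochInf_ne_zero (hq : 0 < q) (hq1 : q < 1) {a : ℂ} (ha : ‖a‖ < 1) :
    qPochInf a q ≠ 0 := by
  rw [qPochInf_eq_exp hq hq1 ha]; exact Complex.exp_ne_zero _

lemma multipliable_of_lt_one (hq : 0 < q) (hq1 : q < 1) {a : ℂ} (ha : ‖a‖ < 1) :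
    Multipliable fun k : ℕ => 1 - a * (q:ℂ) ^ k :=
  ⟨_, qPochInf_hasProd hq hq1 ha⟩

lemma hasProd_split {f : ℕ → ℂ} {t : ℂ} (K : ℕ) (h : HasProd (fun k => f (k + K)) t) :
    HasProd f ((∏ k ∈ Finset.range K, f k) * t) := by
  have h1 : HasProd (fun k : ℕ => if k < K then f k else 1) (∏ k ∈ Finset.range K, f k) := by
    have h1' : HasProd (fun k : ℕ => if k < K then f k else 1)
        (∏ k ∈ Finset.range K, if k < K then f k else 1) :=
      hasProd_prod_of_ne_finset_one (by intro b hb; rw [if_neg]; simpa using hb)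
    convert h1' using 2 with k hk
    rw [if_pos (Finset.mem_range.mp hk)]
  have hinj : Function.Injective (fun k : ℕ => k + K) := add_left_injective K
  have hsupp : ∀ x ∉ Set.range (fun k : ℕ => k + K),
      (if K ≤ x then f x else 1) = 1 := by
    intro x hx
    rw [if_neg]
    intro hKx
    exact hx ⟨x - K, Nat.sub_add_cancel hKx⟩
  have h2 : HasProd (fun k : ℕ => if K ≤ k then f k else 1) t := by
    refine (hinj.hasProd_iff hsupp).mp ?_
    exact h.congr_fun fun k => (if_pos (Nat.le_add_left K k))
  refine (h1.mul h2).congr_fun fun k => ?_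
  rcases lt_or_ge k K with hk | hk
  · simp [hk, Nat.not_le.mpr hk]
  · simp [hk, Nat.not_lt.mpr hk]

set_option maxHeartbeats 1000000 in
lemma qPochInf_split (hq : 0 < q) (hq1 : q < 1) {a : ℂ} (K : ℕ) (ha : ‖a * (q:ℂ) ^ K‖ < 1) :
    qPochInf a q = (∏ k ∈ Finset.range K, (1 - a * (q:ℂ) ^ k)) * qPochInf (a * (q:ℂ) ^ K) q := by
  have htail : HasProd (fun k : ℕ => 1 - a * (q:ℂ) ^ (k + K)) (qPochInf (a * (q:ℂ) ^ K) q) := by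
    have hfe : ∀ k : ℕ, (1 : ℂ) - a * (q:ℂ) ^ (k + K) = 1 - (a * (q:ℂ) ^ K) * (q:ℂ) ^ k := by
      intro k
      rw [pow_add]
      ring
    rw [qPochInf]
    exact ((multipliable_of_lt_one hq hq1 ha).hasProd).congr_fun hfe
  rw [qPochInf]
  exact (hasProd_split K htail).tprod_eq

lemma qPochInf_continuousAt (hq : 0 < q) (hq1 : q < 1) {a : ℂ} (ha : ‖a‖ < 1) :
    ContinuousAt (fun z : ℂ => qPochInf z q) a := by
  set r := (1 + ‖a‖) / 2 with hrdef
  have har : ‖a‖ < r := by rw [hrdef]; linarith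
  have hr1 : r < 1 := by rw [hrdef]; linarith
  have hr0 : 0 ≤ r := le_trans (norm_nonneg a) har.le
  have key : Set.EqOn (fun z : ℂ => qPochInf z q)
      (fun z : ℂ => cexp (∑' k : ℕ, Complex.log (1 - z * (q:ℂ) ^ k))) (Metric.ball 0 r) := by
    intro z hz
    rw [Metric.mem_ball, dist_zero_right] at hz
    exact qPochInf_eq_exp hq hq1 (lt_trans hz hr1)
  have hcont : ContinuousOn (fun z : ℂ => ∑' k : ℕ, Complex.log (1 - z * (q:ℂ) ^ k))
      (Metric.ball 0 r) := by
    apply continuousOn_tsum (u := fun k : ℕ => ((1 - r)⁻¹ / 2 + 1) * (r * q ^ k))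
    · intro k
      apply continuousOn_of_forall_continuousAt
      intro z hz
      rw [Metric.mem_ball, dist_zero_right] at hz
      have hne : (1 : ℂ) - z * (q:ℂ) ^ k ∈ Complex.slitPlane := by
        left
        have hnorm : ‖z * (q:ℂ) ^ k‖ < 1 := by
          rw [norm_mul, norm_q_pow hq]
          calc ‖z‖ * q ^ k ≤ ‖z‖ * 1 := by gcongr; exact pow_le_one₀ hq.le hq1.le
            _ < 1 := by simpa using lt_trans hz hr1
        have := Complex.abs_re_le_norm (z * (q:ℂ) ^ k)
        simp only [Complex.sub_re, Complex.one_re]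
        have h2 : |(z * (q:ℂ) ^ k).re| < 1 := lt_of_le_of_lt this hnorm
        rw [abs_lt] at h2
        linarith [h2.2]
      exact ContinuousAt.clog ((continuous_const.sub (continuous_mul_right _)).continuousAt) hne
    · exact ((summable_geometric_of_lt_one hq.le hq1).mul_left _).mul_left _
    · intro k z hz
      rw [Metric.mem_ball, dist_zero_right] at hz
      exact norm_log_le hq hq1 hr1 hz.le k
  have hc2 : ContinuousOn (fun z : ℂ => qPochInf z q) (Metric.ball 0 r) :=
    (Complex.continuous_exp.comp_continuousOn hcont).congr key
  exact hc2.continuousAt (Metric.isOpen_ball.mem_nhds (by simpa [dist_zero_right] using har))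

lemma clog_ne_zero (hq : 0 < q) (hq1 : q < 1) : Complex.log (q:ℂ) ≠ 0 := by
  rw [← Complex.ofReal_log hq.le]
  have : Real.log q < 0 := Real.log_neg hq hq1
  exact_mod_cast this.ne

lemma tendsto_singular (hq : 0 < q) (hq1 : q < 1) (n : ℕ) :
    Tendsto (fun s : ℂ => (s + n) / (1 - (q:ℂ) ^ (s + (n:ℂ))))
      (nhdsWithin (-(n:ℂ)) {(-(n:ℂ))}ᶜ) (nhds (-(Complex.log (q:ℂ))⁻¹)) := by
  have hq0 : (q:ℂ) ≠ 0 := by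
    simpa using hq.ne'
  set c := Complex.log (q:ℂ) with hc
  have hg : HasDerivAt (fun s : ℂ => 1 - (q:ℂ) ^ (s + (n:ℂ))) (-c) (-(n:ℂ)) := by
    have h1 : HasDerivAt (fun s : ℂ => c * (s + (n:ℂ))) c (-(n:ℂ)) := by
      simpa using ((hasDerivAt_id (-(n:ℂ))).add_const (n:ℂ)).const_mul c
    have h2 := h1.cexp
    have h3 : (fun s : ℂ => (1:ℂ) - (q:ℂ) ^ (s + (n:ℂ)))
        = fun s => 1 - cexp (c * (s + (n:ℂ))) := by
      funext s
      rw [Complex.cpow_def_of_ne_zero hq0]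
    rw [h3]
    have h4 := h2.const_sub 1
    convert h4 using 1
    · rfl
    · rfl
    · simp
  have h5 := hasDerivAt_iff_tendsto_slope.mp hg
  have h6 := h5.inv₀ (by simpa using (neg_ne_zero.mpr (clog_ne_zero hq hq1)))
  rw [show (-c)⁻¹ = -c⁻¹ by ring] at h6
  apply h6.congr
  intro s
  rw [slope_def_field]
  rw [neg_add_cancel, Complex.cpow_zero, sub_self, sub_zero, sub_neg_eq_add, inv_div]

lemma gauss_sum (n : ℕ) : ∑ k ∈ Finset.range n, (n - k) = n * (n + 1) / 2 := by
  have h2 := Finset.sum_range_reflect (fun j => j + 1) n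
  have h3 : ∑ k ∈ Finset.range n, (n - k) = ∑ j ∈ Finset.range n, (j + 1) := by
    rw [← h2]
    apply Finset.sum_congr rfl
    intro k hk
    rw [Finset.mem_range] at hk
    omega
  rw [h3, Finset.sum_add_distrib, Finset.sum_const, Finset.card_range, smul_eq_mul, mul_one,
    Finset.sum_range_id]
  have h4 : n * (n + 1) = n * (n - 1) + 2 * n := by
    cases n with
    | zero => simp
    | succ m =>
        simp only [Nat.add_sub_cancel]
        ring
  omega

lemma prod_identity (hq : 0 < q) (n : ℕ) :
    (-1:ℂ)^n * (q:ℂ)^(n*(n+1)/2) *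
      ∏ k ∈ Finset.range n, (1 - ((q:ℂ)^(n:ℕ))⁻¹ * (q:ℂ)^k)
    = ∏ k ∈ Finset.range n, (1 - (q:ℂ) * (q:ℂ)^k) := by
  have hq0 : (q:ℂ) ≠ 0 := by simpa using hq.ne'
  have h1 : (-1:ℂ)^n * (q:ℂ)^(n*(n+1)/2) = ∏ k ∈ Finset.range n, (-((q:ℂ)^(n-k))) := by
    have e : ∀ k, -((q:ℂ)^(n-k)) = (-1) * (q:ℂ)^(n-k) := fun k => by ring
    simp_rw [e]
    rw [Finset.prod_mul_distrib, Finset.prod_const, Finset.card_range,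
      Finset.prod_pow_eq_pow_sum, gauss_sum]
  rw [h1, ← Finset.prod_mul_distrib, ← Finset.prod_range_reflect (fun k => 1 - (q:ℂ) * (q:ℂ)^k) n]
  apply Finset.prod_congr rfl
  intro k hk
  rw [Finset.mem_range] at hk
  have e2 : (q:ℂ) * (q:ℂ)^(n-1-k) = (q:ℂ)^(n-k) := by
    rw [← pow_succ']
    congr 1
    omega
  have e3 : (q:ℂ)^(n-k) * (q:ℂ)^k = (q:ℂ)^(n:ℕ) := by
    rw [← pow_add]
    congr 1
    omega
  show -((q:ℂ)^(n-k)) * (1 - ((q:ℂ)^(n:ℕ))⁻¹ * (q:ℂ)^k) = 1 - (q:ℂ) * (q:ℂ)^(n-1-k)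
  rw [e2]
  have e4 : ((q:ℂ)^(n:ℕ))⁻¹ * (q:ℂ)^k = ((q:ℂ)^(n-k))⁻¹ := by
    rw [← e3, mul_inv, mul_assoc, inv_mul_cancel₀ (pow_ne_zero _ hq0), mul_one]
  rw [e4]
  have h5 : (q:ℂ)^(n-k) ≠ 0 := pow_ne_zero _ hq0
  field_simp
  ring

end helpers

set_option maxHeartbeats 3000000 in
theorem residues_psi (q x : ℝ) (hq : 0 < q) (hq1 : q < 1) (hx : 0 < x)
    (φ : ℂ → ℂ) (hφ : ∀ n : ℕ, AnalyticAt ℂ φ (n : ℂ)) :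
    ∀ n : ℕ, Tendsto
      (fun s : ℂ => (s + (n : ℂ)) * (qGamma q s * qGamma q (1 - s) * φ (-s) * (x : ℂ) ^ (-s)))
      (nhdsWithin (-(n : ℂ)) {(-(n : ℂ))}ᶜ)
      (nhds ((((1 - q) / Real.log q : ℝ) : ℂ) * (q : ℂ) ^ (n * (n + 1) / 2) *
        (-1 : ℂ) ^ (n + 1) * φ (n : ℂ) * (x : ℂ) ^ (n : ℕ))) := by
  intro n
  have hq0 : (q:ℂ) ≠ 0 := by simpa using hq.ne'
  have hx0 : (x:ℂ) ≠ 0 := by simpa using hx.ne'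
  have hnq : ‖(q:ℂ)‖ = q := by rw [Complex.norm_real, Real.norm_eq_abs, abs_of_pos hq]
  have hB : (1:ℂ) - (q:ℂ) ≠ 0 := by
    intro h
    have h2 : ((1 - q : ℝ) : ℂ) = 0 := by push_cast; linear_combination h
    have h3 : (1 - q : ℝ) = 0 := by exact_mod_cast h2
    linarith
  have hc := clog_ne_zero hq hq1
  have hcont_cpow : Continuous fun s : ℂ => (q:ℂ) ^ s :=
    continuous_iff_continuousAt.2 fun s => continuousAt_const_cpow hq0
  have hcpown : (q:ℂ) ^ (-(n:ℂ)) = ((q:ℂ)^(n:ℕ))⁻¹ := by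
    rw [← Complex.cpow_natCast, ← Complex.cpow_neg]
  have hval : (q:ℂ) ^ (-(n:ℂ)) * (q:ℂ) ^ ((n+1 : ℕ)) = (q:ℂ) := by
    rw [hcpown, pow_succ]
    field_simp
  have hval2 : (q:ℂ) ^ ((1:ℂ) - (-(n:ℂ))) = (q:ℂ) ^ ((n+1:ℕ)) := by
    rw [show (1:ℂ) - (-(n:ℂ)) = ((n+1:ℕ):ℂ) by push_cast; ring, Complex.cpow_natCast]
  have hnormq1 : ‖(q:ℂ)‖ < 1 := by rw [hnq]; exact hq1
  have hnormqn1 : ‖(q:ℂ)^((n+1:ℕ))‖ < 1 := by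
    rw [norm_q_pow hq]
    exact pow_lt_one₀ hq.le hq1 (Nat.succ_ne_zero n)
  -- nonvanishing facts
  have hP : ∀ k, k < n → (1:ℂ) - (q:ℂ)^(-(n:ℂ)) * (q:ℂ)^k ≠ 0 := by
    intro k hk h
    rw [hcpown] at h
    have hqn : ((q:ℂ)^(n:ℕ)) ≠ 0 := pow_ne_zero _ hq0
    have h2 : (q:ℂ)^k = (q:ℂ)^(n:ℕ) := by
      field_simp at h
      linear_combination -h
    have h3 : (q:ℝ)^k = (q:ℝ)^(n:ℕ) := by exact_mod_cast h2
    have h4 : (q:ℝ)^(n:ℕ) < (q:ℝ)^k := pow_lt_pow_right_of_lt_one₀ hq hq1 hk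
    linarith
  have hPne : (∏ k ∈ Finset.range n, (1 - (q:ℂ)^(-(n:ℂ)) * (q:ℂ)^k)) ≠ 0 :=
    Finset.prod_ne_zero_iff.mpr fun k hk => hP k (Finset.mem_range.mp hk)
  have hCne : qPochInf (q:ℂ) q ≠ 0 := qPochInf_ne_zero hq hq1 hnormq1
  have hTne : qPochInf ((q:ℂ)^((n+1:ℕ))) q ≠ 0 := qPochInf_ne_zero hq hq1 hnormqn1
  -- the regular part
  set H : ℂ → ℂ := fun s =>
    qPochInf (q:ℂ) q * ((1:ℂ)-(q:ℂ)) ^ ((1:ℂ) - s) /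
      ((∏ k ∈ Finset.range n, (1 - (q:ℂ)^s * (q:ℂ)^k)) *
        qPochInf ((q:ℂ)^s * (q:ℂ)^((n+1:ℕ))) q) *
      (qGamma q (1 - s) * φ (-s) * (x:ℂ) ^ (-s)) with hH
  -- eventual equality
  have hev : ∀ᶠ s in nhdsWithin (-(n:ℂ)) {(-(n:ℂ))}ᶜ,
      ((s + (n:ℂ)) / (1 - (q:ℂ) ^ (s + (n:ℂ)))) * H s
      = (s + (n:ℂ)) * (qGamma q s * qGamma q (1 - s) * φ (-s) * (x:ℂ) ^ (-s)) := by
    have hlim : Tendsto (fun s : ℂ => ‖(q:ℂ)^s * (q:ℂ)^((n+1:ℕ))‖) (nhds (-(n:ℂ)))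
        (nhds ‖(q:ℂ)^(-(n:ℂ)) * (q:ℂ)^((n+1:ℕ))‖) :=
      ((hcont_cpow.mul continuous_const).norm).continuousAt
    have hsmall : ∀ᶠ s in nhds (-(n:ℂ)), ‖(q:ℂ)^s * (q:ℂ)^((n+1:ℕ))‖ < 1 := by
      apply hlim.eventually_lt_const
      rw [hval, hnq]
      exact hq1
    filter_upwards [hsmall.filter_mono nhdsWithin_le_nhds] with s hs
    have hsplit := qPochInf_split hq hq1 (a := (q:ℂ)^s) (n+1) hs
    rw [Finset.prod_range_succ] at hsplit
    have hd : (q:ℂ)^(s + (n:ℂ)) = (q:ℂ)^s * (q:ℂ)^(n:ℕ) := by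
      rw [Complex.cpow_add _ _ hq0, Complex.cpow_natCast]
    have hqG : qGamma q s = qPochInf (q:ℂ) q /
        ((∏ k ∈ Finset.range n, (1 - (q:ℂ)^s * (q:ℂ)^k)) * (1 - (q:ℂ)^s * (q:ℂ)^(n:ℕ)) *
          qPochInf ((q:ℂ)^s * (q:ℂ)^((n+1:ℕ))) q) * ((1:ℂ)-(q:ℂ))^(1-s) := by
      rw [qGamma, hsplit]
    rw [hqG, hH, hd]
    simp only [div_eq_mul_inv, mul_inv]
    ring
  -- continuity of H at -n
  have hA : ContinuousAt (fun s : ℂ => qPochInf ((q:ℂ)^s * (q:ℂ)^((n+1:ℕ))) q) (-(n:ℂ)) := by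
    have h1 : ContinuousAt (fun z : ℂ => qPochInf z q) ((q:ℂ)^(-(n:ℂ)) * (q:ℂ)^((n+1:ℕ))) := by
      rw [hval]
      exact qPochInf_continuousAt hq hq1 hnormq1
    have h2 := ContinuousAt.comp (g := fun z : ℂ => qPochInf z q)
      (f := fun s : ℂ => (q:ℂ)^s * (q:ℂ)^((n+1:ℕ))) h1
      ((hcont_cpow.mul continuous_const).continuousAt)
    exact h2
  have hPcont : ContinuousAt
      (fun s : ℂ => ∏ k ∈ Finset.range n, (1 - (q:ℂ)^s * (q:ℂ)^k)) (-(n:ℂ)) := by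
    apply Continuous.continuousAt
    apply continuous_finset_prod
    intro k _
    exact continuous_const.sub (hcont_cpow.mul continuous_const)
  have hG1 : ContinuousAt (fun s : ℂ => qGamma q (1 - s)) (-(n:ℂ)) := by
    simp only [qGamma]
    have hinner : Continuous (fun s : ℂ => (q:ℂ)^((1:ℂ) - s)) :=
      hcont_cpow.comp (continuous_const.sub continuous_id)
    have h1 : ContinuousAt (fun s : ℂ => qPochInf ((q:ℂ)^((1:ℂ)-s)) q) (-(n:ℂ)) := by
      have h2 : ContinuousAt (fun z : ℂ => qPochInf z q) ((q:ℂ)^((1:ℂ) - (-(n:ℂ)))) := by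
        rw [hval2]
        exact qPochInf_continuousAt hq hq1 hnormqn1
      exact ContinuousAt.comp (g := fun z : ℂ => qPochInf z q)
        (f := fun s : ℂ => (q:ℂ)^((1:ℂ) - s)) h2 hinner.continuousAt
    have hne : qPochInf ((q:ℂ)^((1:ℂ) - (-(n:ℂ)))) q ≠ 0 := by
      rw [hval2]
      exact hTne
    have h3 : ContinuousAt (fun s : ℂ => qPochInf (q:ℂ) q / qPochInf ((q:ℂ)^((1:ℂ)-s)) q)
        (-(n:ℂ)) := continuousAt_const.div h1 hne
    have h4 : ContinuousAt (fun s : ℂ => ((1:ℂ)-(q:ℂ))^((1:ℂ) - ((1:ℂ) - s))) (-(n:ℂ)) :=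
      (continuousAt_const_cpow hB).comp
        (continuous_const.sub (continuous_const.sub continuous_id)).continuousAt
    exact h3.mul h4
  have hφc : ContinuousAt (fun s : ℂ => φ (-s)) (-(n:ℂ)) := by
    have h1 : ContinuousAt φ (-(-(n:ℂ))) := by
      rw [neg_neg]
      exact (hφ n).continuousAt
    exact h1.comp continuous_neg.continuousAt
  have hxc : ContinuousAt (fun s : ℂ => (x:ℂ)^(-s)) (-(n:ℂ)) :=
    (continuousAt_const_cpow hx0).comp continuous_neg.continuousAt
  have hBc : ContinuousAt (fun s : ℂ => ((1:ℂ)-(q:ℂ))^((1:ℂ) - s)) (-(n:ℂ)) :=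
    (continuousAt_const_cpow hB).comp (continuous_const.sub continuous_id).continuousAt
  have hDen_ne : (∏ k ∈ Finset.range n, (1 - (q:ℂ)^(-(n:ℂ)) * (q:ℂ)^k)) *
      qPochInf ((q:ℂ)^(-(n:ℂ)) * (q:ℂ)^((n+1:ℕ))) q ≠ 0 := by
    apply mul_ne_zero hPne
    rw [hval]
    exact hCne
  have hHcont : ContinuousAt H (-(n:ℂ)) := by
    rw [hH]
    exact ((continuousAt_const.mul hBc).div (hPcont.mul hA) hDen_ne).mul
      ((hG1.mul hφc).mul hxc)
  -- the limit
  have hT := (tendsto_singular hq hq1 n).mul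
    (hHcont.tendsto.mono_left nhdsWithin_le_nhds)
  have hmain := hT.congr' hev
  -- compute the value
  have hfinal : -(Complex.log (q:ℂ))⁻¹ * H (-(n:ℂ)) =
      (((1 - q) / Real.log q : ℝ) : ℂ) * (q:ℂ) ^ (n * (n + 1) / 2) * (-1:ℂ) ^ (n + 1) *
        φ (n:ℂ) * (x:ℂ) ^ (n:ℕ) := by
    have hcast : (((1 - q) / Real.log q : ℝ) : ℂ) = ((1:ℂ) - (q:ℂ)) / Complex.log (q:ℂ) := by
      rw [Complex.ofReal_div, ← Complex.ofReal_log hq.le]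
      push_cast
      ring
    have eB1 : ((1:ℂ)-(q:ℂ))^((1:ℂ) - (-(n:ℂ))) = ((1:ℂ)-(q:ℂ))^((n+1:ℕ)) := by
      rw [show (1:ℂ) - (-(n:ℂ)) = ((n+1:ℕ):ℂ) by push_cast; ring, Complex.cpow_natCast]
    have eB2 : ((1:ℂ)-(q:ℂ))^((1:ℂ) - ((1:ℂ) - (-(n:ℂ)))) = (((1:ℂ)-(q:ℂ))^(n:ℕ))⁻¹ := by
      rw [show (1:ℂ) - ((1:ℂ) - (-(n:ℂ))) = -((n:ℕ):ℂ) by ring, Complex.cpow_neg,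
        Complex.cpow_natCast]
    have ex : (x:ℂ)^(-(-(n:ℂ))) = (x:ℂ)^(n:ℕ) := by
      rw [neg_neg, Complex.cpow_natCast]
    have eφ : φ (-(-(n:ℂ))) = φ ((n:ℕ):ℂ) := by rw [neg_neg]
    have hsplitC : qPochInf (q:ℂ) q =
        (∏ k ∈ Finset.range n, (1 - (q:ℂ) * (q:ℂ)^k)) * qPochInf ((q:ℂ)^((n+1:ℕ))) q := by
      have hnorm : ‖(q:ℂ) * (q:ℂ)^(n:ℕ)‖ < 1 := by
        rw [show (q:ℂ) * (q:ℂ)^(n:ℕ) = (q:ℂ)^((n+1:ℕ)) from (pow_succ' _ _).symm]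
        exact hnormqn1
      have h := qPochInf_split hq hq1 (a := (q:ℂ)) n hnorm
      rw [show (q:ℂ) * (q:ℂ)^(n:ℕ) = (q:ℂ)^((n+1:ℕ)) from (pow_succ' _ _).symm] at h
      exact h
    have hprod := prod_identity (q := q) hq n
    have hC : qPochInf (q:ℂ) q =
        ((-1:ℂ)^n * (q:ℂ)^(n*(n+1)/2) *
          ∏ k ∈ Finset.range n, (1 - ((q:ℂ)^(n:ℕ))⁻¹ * (q:ℂ)^k)) *
          qPochInf ((q:ℂ)^((n+1:ℕ))) q := by
      rw [hsplitC, hprod]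
    rw [hH]
    simp only [qGamma]
    rw [eB1, eB2, ex, eφ, hval, hval2, hcast, hcpown, hC]
    rw [pow_succ ((1:ℂ)-(q:ℂ)) n, pow_succ (-1:ℂ) n]
    have hE : (-1:ℂ)^n ≠ 0 := pow_ne_zero _ (by norm_num)
    have hM : ((q:ℂ)^(n*(n+1)/2 : ℕ)) ≠ 0 := pow_ne_zero _ hq0
    have hBn : (((1:ℂ)-(q:ℂ))^(n:ℕ)) ≠ 0 := pow_ne_zero _ hB
    have hPne' : (∏ k ∈ Finset.range n, (1 - ((q:ℂ)^(n:ℕ))⁻¹ * (q:ℂ)^k)) ≠ 0 := by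
      rw [← hcpown]
      exact hPne
    set P := (∏ k ∈ Finset.range n, (1 - ((q:ℂ)^(n:ℕ))⁻¹ * (q:ℂ)^k)) with hPdef
    set T := qPochInf ((q:ℂ)^((n+1:ℕ))) q with hTdef
    set M := ((q:ℂ)^(n*(n+1)/2 : ℕ)) with hMdef
    set E := ((-1:ℂ)^n) with hEdef
    set Bn := (((1:ℂ)-(q:ℂ))^(n:ℕ)) with hBndef
    set L := Complex.log (q:ℂ) with hLdef
    clear_value P T M E Bn L
    have hEMPT : E * M * P * T ≠ 0 := mul_ne_zero (mul_ne_zero (mul_ne_zero hE hM) hPne') hTne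
    rw [mul_comm P (E * M * P * T), mul_div_mul_left (Bn * ((1:ℂ) - (q:ℂ))) P hEMPT,
      mul_div_cancel_right₀ (E * M * P) hTne]
    field_simp
  rw [hfinal] at hmain
  exact hmain
end
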